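/- arXiv:1805.09179 — 4 statements merged into one kernel-verified Lean document; each statement's English description precedes it below -/
import Mathlib

section
/- Let Δ be a flag normal (d−1)-pseudomanifold and let σ be a facet of Δ written as a disjoint union σ = σ₁ ∪ σ₂ with σ₁, σ₂ nonempty and σ₁ ∩ σ₂ = ∅. Then V(lk(σ₁,Δ)) and V(lk(σ₂,Δ)) are disjoint with union V(Δ) if and only if Δ = lk(σ₁,Δ) * lk(σ₂,Δ). -/
open Finset

variable {V : Type*} [DecidableEq V]

/-- A simplicial complex on (a subset of) the vertex type `V`: a collection of
finite sets (the faces) that contains the empty set and is closed under inclusion. -/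
def IsComplex (Δ : Finset (Finset V)) : Prop :=
  ∅ ∈ Δ ∧ ∀ σ ∈ Δ, ∀ τ ⊆ σ, τ ∈ Δ

/-- The vertex set `V(Δ)` of a complex. -/
def verts (Δ : Finset (Finset V)) : Finset V := Δ.sup id

/-- The link `lk(σ,Δ) = {τ ∈ Δ : τ ∩ σ = ∅ ∧ τ ∪ σ ∈ Δ}`. -/
def link (Δ : Finset (Finset V)) (σ : Finset V) : Finset (Finset V) :=
  Δ.filter fun τ => τ ∩ σ = ∅ ∧ τ ∪ σ ∈ Δ

/-- The induced subcomplex `Δ[W] = {σ ∈ Δ : σ ⊆ W}`. -/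
def induced (Δ : Finset (Finset V)) (W : Finset V) : Finset (Finset V) :=
  Δ.filter fun σ => σ ⊆ W

/-- `fNum Δ i` is the number `f_i(Δ)` of `i`-dimensional faces of `Δ`,
i.e. of faces of cardinality `i + 1`. -/
def fNum (Δ : Finset (Finset V)) (i : ℕ) : ℕ :=
  (Δ.filter fun σ => σ.card = i + 1).card

/-- `Δ` is flag: every set of vertices all of whose two-element subsets are
faces of `Δ` is itself a face of `Δ`.  (Taking `u = v` below, this in particular
requires each member of `S` to be a vertex of `Δ`.) -/
def IsFlag (Δ : Finset (Finset V)) : Prop :=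
  ∀ S : Finset V, (∀ u ∈ S, ∀ v ∈ S, ({u, v} : Finset V) ∈ Δ) → S ∈ Δ

/-- A facet: an inclusion-maximal face. -/
def IsFacet (Δ : Finset (Finset V)) (σ : Finset V) : Prop :=
  σ ∈ Δ ∧ ∀ τ ∈ Δ, σ ⊆ τ → τ = σ

/-- A `(d-1)`-dimensional pseudomanifold: a pure `(d-1)`-dimensional complex
(all facets have cardinality `d`) in which every `(d-2)`-dimensional face
(cardinality `d-1`) is contained in exactly two facets (= faces of cardinality `d`). -/
def IsPseudomanifold (Δ : Finset (Finset V)) (d : ℕ) : Prop :=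
  IsComplex Δ ∧ (∀ σ, IsFacet Δ σ → σ.card = d) ∧
    ∀ τ ∈ Δ, τ.card = d - 1 → (Δ.filter fun σ => σ.card = d ∧ τ ⊆ σ).card = 2

/-- The 1-skeleton graph of a complex. -/
def skGraph (Δ : Finset (Finset V)) : SimpleGraph V where
  Adj u v := u ≠ v ∧ ({u, v} : Finset V) ∈ Δ
  symm := ⟨fun u v h => ⟨h.1.symm, by rw [Finset.pair_comm]; exact h.2⟩⟩
  loopless := ⟨fun u h => h.1 rfl⟩

/-- The 1-skeleton graph, restricted to the vertex set of `Δ`, is connected. -/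
def ConnOn (Δ : Finset (Finset V)) : Prop :=
  ((skGraph Δ).induce (verts Δ : Set V)).Connected

/-- A normal `(d-1)`-pseudomanifold: the 1-skeleton is connected and the
1-skeleton of the link of each face of dimension at most `d-3`
(cardinality at most `d-2`) is connected. -/
def IsNormalPseudomanifold (Δ : Finset (Finset V)) (d : ℕ) : Prop :=
  IsPseudomanifold Δ d ∧ ConnOn Δ ∧
    ∀ σ ∈ Δ, σ.card + 2 ≤ d → ConnOn (link Δ σ)

/-- A circle (cycle): a connected 1-dimensional pseudomanifold. -/
def IsCircle (Δ : Finset (Finset V)) : Prop :=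
  IsPseudomanifold Δ 2 ∧ ConnOn Δ

/-- The 0-dimensional complex consisting of two disjoint vertices. -/
def IsTwoPoints (P : Finset (Finset V)) : Prop :=
  ∃ a b : V, a ≠ b ∧ P = {∅, {a}, {b}}

/-- The join of two complexes (on disjoint vertex sets): faces `σ ∪ τ`
with `σ ∈ Δ`, `τ ∈ Γ`. -/
def join (Δ Γ : Finset (Finset V)) : Finset (Finset V) :=
  (Δ ×ˢ Γ).image fun p => p.1 ∪ p.2

/-- `Δ` is the suspension of a circle: the join of a circle with two disjoint points. -/
def IsSuspensionOfCircle (Δ : Finset (Finset V)) : Prop :=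
  ∃ C P, IsCircle C ∧ IsTwoPoints P ∧ Disjoint (verts C) (verts P) ∧ Δ = join C P

/-- Iterated join of a family of complexes. -/
def joinFam : (m : ℕ) → (Fin m → Finset (Finset V)) → Finset (Finset V)
  | 0, _ => {∅}
  | m + 1, C => join (C 0) (joinFam m fun i => C i.succ)

/-- `Δ` is the join of `m` circles (on pairwise disjoint vertex sets). -/
def IsJoinOfCircles (Δ : Finset (Finset V)) (m : ℕ) : Prop :=
  ∃ C : Fin m → Finset (Finset V), (∀ i, IsCircle (C i)) ∧
    (∀ i j, i ≠ j → Disjoint (verts (C i)) (verts (C j))) ∧ Δ = joinFam m C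

/-- `a_k = Σ_{τ ⊆ σ, |τ| = k} f₀(lk(τ,Δ))`. -/
def aNum (Δ : Finset (Finset V)) (σ : Finset V) (k : ℕ) : ℕ :=
  ∑ τ ∈ σ.powersetCard k, fNum (link Δ τ) 0

/-- `W_τ`: the vertices `w` of `lk(τ,Δ)` with `{w,u} ∉ Δ` for every `u ∈ σ \ τ`. -/
def Wset (Δ : Finset (Finset V)) (σ τ : Finset V) : Finset V :=
  (verts (link Δ τ)).filter fun w => ∀ u ∈ σ \ τ, ({w, u} : Finset V) ∉ Δ

/-- `b_k = Σ_{τ ⊆ σ, |τ| = k} |W_τ|`. -/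
def bNum (Δ : Finset (Finset V)) (σ : Finset V) (k : ℕ) : ℕ :=
  ∑ τ ∈ σ.powersetCard k, (Wset Δ σ τ).card

/-- The Euler characteristic `χ(Δ) = Σ_{i ≥ 0} (-1)^i f_i(Δ)`, computed as a sum
of `(-1)^{|σ|-1}` over the nonempty faces `σ`. -/
def eulerChar (Δ : Finset (Finset V)) : ℤ :=
  ∑ σ ∈ Δ.filter (fun σ => σ ≠ ∅), (-1 : ℤ) ^ (σ.card - 1)

/-- `Δ` is Eulerian: for every face `σ` (including `σ = ∅`, whose link is `Δ`),
`χ(lk(σ,Δ)) = 1 + (-1)^{dim lk(σ,Δ)}`; since `dim lk(σ,Δ)` is one less than the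
maximal cardinality of a face of the link, this equals `1 - (-1)^{max card}`. -/
def IsEulerian (Δ : Finset (Finset V)) : Prop :=
  ∀ σ ∈ Δ, eulerChar (link Δ σ) = 1 - (-1) ^ ((link Δ σ).sup Finset.card)


section Helpers
variable {V : Type*} [DecidableEq V]

lemma mem_verts {Γ : Finset (Finset V)} {a : V} : a ∈ verts Γ ↔ ∃ τ ∈ Γ, a ∈ τ := by
  simp [verts, Finset.mem_sup]

lemma subset_verts {Γ : Finset (Finset V)} {τ : Finset V} (h : τ ∈ Γ) : τ ⊆ verts Γ :=
  fun a ha => mem_verts.2 ⟨τ, h, ha⟩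

lemma mem_link {Δ : Finset (Finset V)} {σ τ : Finset V} :
    τ ∈ link Δ σ ↔ τ ∈ Δ ∧ τ ∩ σ = ∅ ∧ τ ∪ σ ∈ Δ := by
  simp [link, Finset.mem_filter]

lemma link_complex {Δ : Finset (Finset V)} {σ : Finset V} (hC : IsComplex Δ) (hσ : σ ∈ Δ) :
    IsComplex (link Δ σ) := by
  constructor
  · exact mem_link.2 ⟨hC.1, by simp, by simpa using hσ⟩
  · intro τ hτ τ' hsub
    rw [mem_link] at hτ ⊢
    refine ⟨hC.2 _ hτ.1 _ hsub, ?_, hC.2 _ hτ.2.2 _ (Finset.union_subset_union_left hsub)⟩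
    have : τ' ∩ σ ⊆ τ ∩ σ := Finset.inter_subset_inter_right hsub
    rw [hτ.2.1] at this
    exact Finset.subset_empty.1 this

lemma singleton_mem_of_mem_verts {Γ : Finset (Finset V)} {a : V} (hC : IsComplex Γ)
    (h : a ∈ verts Γ) : ({a} : Finset V) ∈ Γ := by
  obtain ⟨τ, hτ, ha⟩ := mem_verts.1 h
  exact hC.2 _ hτ _ (Finset.singleton_subset_iff.2 ha)

lemma exists_facet {Δ : Finset (Finset V)} {τ : Finset V} (hτ : τ ∈ Δ) :
    ∃ F, IsFacet Δ F ∧ τ ⊆ F := by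
  obtain ⟨F, hF, hmax⟩ := Finset.exists_max_image (Δ.filter fun s => τ ⊆ s) Finset.card
    ⟨τ, Finset.mem_filter.2 ⟨hτ, Finset.Subset.refl τ⟩⟩
  rw [Finset.mem_filter] at hF
  refine ⟨F, ⟨hF.1, ?_⟩, hF.2⟩
  intro τ' hτ' hsub
  have h1 : τ' ∈ Δ.filter fun s => τ ⊆ s := Finset.mem_filter.2 ⟨hτ', hF.2.trans hsub⟩
  exact (Finset.eq_of_subset_of_card_le hsub (hmax _ h1)).symm

lemma card_le_of_mem {Δ : Finset (Finset V)} {d : ℕ} (h : IsPseudomanifold Δ d)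
    {τ : Finset V} (hτ : τ ∈ Δ) : τ.card ≤ d := by
  obtain ⟨F, hF, hsub⟩ := exists_facet hτ
  rw [← h.2.1 F hF]
  exact Finset.card_le_card hsub

lemma facet_of_card {Δ : Finset (Finset V)} {d : ℕ} (h : IsPseudomanifold Δ d)
    {τ : Finset V} (hτ : τ ∈ Δ) (hc : τ.card = d) : IsFacet Δ τ := by
  refine ⟨hτ, fun τ' hτ' hsub => ?_⟩
  exact (Finset.eq_of_subset_of_card_le hsub (by rw [hc]; exact card_le_of_mem h hτ')).symm

lemma facet_sdiff_link {Δ : Finset (Finset V)} {σ F : Finset V}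
    (hF : IsFacet Δ F) (hC : IsComplex Δ) (hsub : σ ⊆ F) : IsFacet (link Δ σ) (F \ σ) := by
  have hmem : F \ σ ∈ link Δ σ := mem_link.2
    ⟨hC.2 _ hF.1 _ (Finset.sdiff_subset), Finset.sdiff_inter_self _ _,
      by rw [Finset.sdiff_union_self_eq_union, Finset.union_eq_left.2 hsub]; exact hF.1⟩
  refine ⟨hmem, fun β hβ hsub2 => ?_⟩
  rw [mem_link] at hβ
  have hFβ : F ⊆ β ∪ σ := by
    intro a ha
    by_cases h : a ∈ σ
    · exact Finset.mem_union_right _ h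
    · exact Finset.mem_union_left _ (hsub2 (Finset.mem_sdiff.2 ⟨ha, h⟩))
  have := hF.2 _ hβ.2.2 hFβ
  rw [← this]
  rw [Finset.union_sdiff_cancel_right ?_]
  · exact Finset.disjoint_iff_inter_eq_empty.2 hβ.2.1

lemma facet_link_facet {Δ : Finset (Finset V)} {σ β : Finset V} (hC : IsComplex Δ)
    (hβ : IsFacet (link Δ σ) β) : IsFacet Δ (β ∪ σ) ∧ β ∩ σ = ∅ := by
  have h1 := mem_link.1 hβ.1
  obtain ⟨F, hF, hsub⟩ := exists_facet h1.2.2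
  have hσF : σ ⊆ F := (Finset.subset_union_right).trans hsub
  have := (facet_sdiff_link hF hC hσF).1
  have hβ2 : β ⊆ F \ σ := by
    intro a ha
    exact Finset.mem_sdiff.2 ⟨hsub (Finset.mem_union_left _ ha),
      fun h => (Finset.notMem_empty a) (h1.2.1 ▸ Finset.mem_inter.2 ⟨ha, h⟩)⟩
  have heq := hβ.2 _ this hβ2
  have hFeq : F = β ∪ σ := by
    rw [← heq, Finset.sdiff_union_self_eq_union, Finset.union_eq_left.2 hσF]
  exact ⟨hFeq ▸ hF, h1.2.1⟩

end Helpers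

section Helpers2
variable {V : Type*} [DecidableEq V]

lemma link_link {Δ : Finset (Finset V)} {σ τ : Finset V} (hC : IsComplex Δ)
    (hd : τ ∩ σ = ∅) : link (link Δ σ) τ = link Δ (σ ∪ τ) := by
  ext γ
  simp only [mem_link]
  constructor
  · rintro ⟨⟨hγ, hγσ, hγσΔ⟩, hγτ, hτΔ, hτσ, hτσΔ⟩
    refine ⟨hγ, ?_, ?_⟩
    · rw [Finset.inter_union_distrib_left, hγσ, hγτ, Finset.empty_union]
    · have : γ ∪ (σ ∪ τ) = γ ∪ τ ∪ σ := by
        rw [Finset.union_assoc, Finset.union_comm σ τ, ← Finset.union_assoc]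
      rw [this]; exact hτσΔ
  · rintro ⟨hγ, hint, hun⟩
    have hγσ : γ ∩ σ = ∅ := by
      rw [← Finset.subset_empty, ← hint]
      exact Finset.inter_subset_inter (Finset.Subset.refl _) Finset.subset_union_left
    have hγτ : γ ∩ τ = ∅ := by
      rw [← Finset.subset_empty, ← hint]
      exact Finset.inter_subset_inter (Finset.Subset.refl _) Finset.subset_union_right
    have hassoc : γ ∪ τ ∪ σ = γ ∪ (σ ∪ τ) := by
      rw [Finset.union_assoc, Finset.union_comm τ σ]
    refine ⟨⟨hγ, hγσ, hC.2 _ hun _ (Finset.union_subset_union_right Finset.subset_union_left)⟩,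
      hγτ, hC.2 _ hun _ (Finset.union_subset_union_right Finset.subset_union_right), ?_, ?_⟩
    · rw [Finset.union_inter_distrib_right, hγσ, hd, Finset.empty_union]
    · rw [hassoc]; exact hun

lemma link_pm {Δ : Finset (Finset V)} {d : ℕ} {σ : Finset V} (h : IsPseudomanifold Δ d)
    (hσ : σ ∈ Δ) (hlt : σ.card < d) : IsPseudomanifold (link Δ σ) (d - σ.card) := by
  have hC := h.1
  refine ⟨link_complex hC hσ, ?_, ?_⟩
  · intro β hβ
    obtain ⟨hfac, hint⟩ := facet_link_facet hC hβ
    have hcard := h.2.1 _ hfac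
    rw [Finset.card_union_of_disjoint (Finset.disjoint_iff_inter_eq_empty.2 hint)] at hcard
    omega
  · intro ρ hρ hρc
    rw [mem_link] at hρ
    have hdisj : Disjoint ρ σ := Finset.disjoint_iff_inter_eq_empty.2 hρ.2.1
    have hρσc : (ρ ∪ σ).card = d - 1 := by
      rw [Finset.card_union_of_disjoint hdisj]; omega
    have hpm := h.2.2 (ρ ∪ σ) hρ.2.2 hρσc
    rw [← hpm]
    apply Finset.card_bij (fun β _ => β ∪ σ)
    · intro β hβ
      simp only [Finset.mem_filter] at hβ ⊢
      obtain ⟨hβ1, hβ2, hβ3⟩ := hβ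
      rw [mem_link] at hβ1
      refine ⟨hβ1.2.2, ?_, Finset.union_subset_union_left hβ3⟩
      rw [Finset.card_union_of_disjoint (Finset.disjoint_iff_inter_eq_empty.2 hβ1.2.1)]
      omega
    · intro β1 hβ1 β2 hβ2 heq
      simp only [Finset.mem_filter, mem_link] at hβ1 hβ2
      have e1 : β1 = (β1 ∪ σ) \ σ := by
        rw [Finset.union_sdiff_cancel_right (Finset.disjoint_iff_inter_eq_empty.2 hβ1.1.2.1)]
      have e2 : β2 = (β2 ∪ σ) \ σ := by
        rw [Finset.union_sdiff_cancel_right (Finset.disjoint_iff_inter_eq_empty.2 hβ2.1.2.1)]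
      rw [e1, e2, heq]
    · intro F hF
      simp only [Finset.mem_filter] at hF
      obtain ⟨hF1, hF2, hF3⟩ := hF
      have hσF : σ ⊆ F := Finset.subset_union_right.trans hF3
      have hρF : ρ ⊆ F \ σ := fun a ha => Finset.mem_sdiff.2
        ⟨hF3 (Finset.mem_union_left _ ha),
         fun hc => (Finset.notMem_empty a) (hρ.2.1 ▸ Finset.mem_inter.2 ⟨ha, hc⟩)⟩
      refine ⟨F \ σ, Finset.mem_filter.2 ⟨mem_link.2 ⟨hC.2 _ hF1 _ Finset.sdiff_subset,
        Finset.sdiff_inter_self _ _, ?_⟩, ?_, hρF⟩, ?_⟩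
      · rw [Finset.sdiff_union_self_eq_union, Finset.union_eq_left.2 hσF]; exact hF1
      · rw [Finset.card_sdiff_of_subset hσF, hF2]
      · rw [Finset.sdiff_union_self_eq_union, Finset.union_eq_left.2 hσF]

end Helpers2

section SC
variable {V : Type*} [DecidableEq V]

/-- One step between facets: move to another facet sharing all but at most one vertex. -/
def FStep (Δ : Finset (Finset V)) (n : ℕ) (F G : Finset V) : Prop :=
  G ∈ Δ ∧ G.card = n ∧ n ≤ (F ∩ G).card + 1

lemma lift_walk {Δ : Finset (Finset V)} {n : ℕ} {v : V} {β β' : Finset V}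
    (hw : Relation.ReflTransGen (FStep (link Δ {v}) n) β β') :
    Relation.ReflTransGen (FStep Δ (n+1)) (β ∪ {v}) (β' ∪ {v}) := by
  induction hw with
  | refl => exact Relation.ReflTransGen.refl
  | @tail b c _ hstep ihw =>
    obtain ⟨hcΛ, hcard, hint⟩ := hstep
    have hcm := mem_link.1 hcΛ
    have hvc : v ∉ c := fun hc => (Finset.notMem_empty v)
      (hcm.2.1 ▸ Finset.mem_inter.2 ⟨hc, Finset.mem_singleton_self v⟩)
    refine ihw.tail ⟨hcm.2.2, ?_, ?_⟩
    · rw [Finset.card_union_of_disjoint (by simp [hvc]), hcard, Finset.card_singleton]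
    · have hsub : (b ∩ c) ∪ {v} ⊆ (b ∪ {v}) ∩ (c ∪ {v}) := by
        intro a ha
        rcases Finset.mem_union.1 ha with ha | ha
        · exact Finset.mem_inter.2 ⟨Finset.mem_union_left _ (Finset.mem_inter.1 ha).1,
            Finset.mem_union_left _ (Finset.mem_inter.1 ha).2⟩
        · exact Finset.mem_inter.2 ⟨Finset.mem_union_right _ ha,
            Finset.mem_union_right _ ha⟩
      have hvbc : v ∉ b ∩ c := fun hc => hvc (Finset.mem_inter.1 hc).2
      have := Finset.card_le_card hsub
      rw [Finset.card_union_of_disjoint (by simp [hvbc]), Finset.card_singleton] at this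
      omega

lemma strong_conn : ∀ (n : ℕ) (Δ : Finset (Finset V)), IsPseudomanifold Δ n →
    (∀ τ ∈ Δ, τ.card + 2 ≤ n → ConnOn (link Δ τ)) → (2 ≤ n → ConnOn Δ) →
    ∀ F G, IsFacet Δ F → IsFacet Δ G → Relation.ReflTransGen (FStep Δ n) F G := by
  intro n
  induction n with
  | zero =>
    intro Δ h _ _ F G hF hG
    exact Relation.ReflTransGen.single ⟨hG.1, h.2.1 _ hG, by omega⟩
  | succ n ih =>
    intro Δ h hconn hc0 F G hF hG
    rcases Nat.eq_zero_or_pos n with hn | hn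
    · subst hn
      exact Relation.ReflTransGen.single ⟨hG.1, h.2.1 _ hG, by omega⟩
    have hC := h.1
    -- Claim 1: facets sharing a vertex are connected
    have claim1 : ∀ v : V, ({v} : Finset V) ∈ Δ → ∀ F G, IsFacet Δ F → IsFacet Δ G →
        v ∈ F → v ∈ G → Relation.ReflTransGen (FStep Δ (n+1)) F G := by
      intro v hv F G hF hG hvF hvG
      have hpm : IsPseudomanifold (link Δ {v}) n := by
        have := link_pm h hv (by rw [Finset.card_singleton]; omega)
        rwa [Finset.card_singleton, Nat.add_sub_cancel] at this
      have hconnΛ : ∀ τ ∈ link Δ {v}, τ.card + 2 ≤ n → ConnOn (link (link Δ {v}) τ) := by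
        intro τ hτ hcard
        have hτm := mem_link.1 hτ
        rw [link_link hC hτm.2.1]
        have hvτ : v ∉ τ := fun hc => (Finset.notMem_empty v)
          (hτm.2.1 ▸ Finset.mem_inter.2 ⟨hc, Finset.mem_singleton_self v⟩)
        apply hconn
        · rw [Finset.union_comm]; exact hτm.2.2
        · have : ({v} ∪ τ).card = τ.card + 1 := by
            rw [Finset.union_comm, Finset.card_union_of_disjoint (by simp [hvτ]),
              Finset.card_singleton]
          omega
      have hc0Λ : 2 ≤ n → ConnOn (link Δ {v}) := fun h2 =>
        hconn {v} hv (by rw [Finset.card_singleton]; omega)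
      have hFΛ := facet_sdiff_link hF hC (Finset.singleton_subset_iff.2 hvF)
      have hGΛ := facet_sdiff_link hG hC (Finset.singleton_subset_iff.2 hvG)
      have hwalk := ih (link Δ {v}) hpm hconnΛ hc0Λ _ _ hFΛ hGΛ
      have key := lift_walk hwalk
      have eF : (F \ {v}) ∪ {v} = F := by
        rw [Finset.sdiff_union_self_eq_union,
          Finset.union_eq_left.2 (Finset.singleton_subset_iff.2 hvF)]
      have eG : (G \ {v}) ∪ {v} = G := by
        rw [Finset.sdiff_union_self_eq_union,
          Finset.union_eq_left.2 (Finset.singleton_subset_iff.2 hvG)]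
      rwa [eF, eG] at key
    -- Main: use connectivity of the 1-skeleton
    have hconn2 : ((skGraph Δ).induce (verts Δ : Set V)).Connected := hc0 (by omega)
    have hFne : F.Nonempty := Finset.card_pos.1 (by rw [h.2.1 F hF]; omega)
    have hGne : G.Nonempty := Finset.card_pos.1 (by rw [h.2.1 G hG]; omega)
    obtain ⟨u₀, hu₀⟩ := hFne
    obtain ⟨w₀, hw₀⟩ := hGne
    have hu₀v : u₀ ∈ verts Δ := subset_verts hF.1 hu₀
    have hw₀v : w₀ ∈ verts Δ := subset_verts hG.1 hw₀
    have hreach := hconn2.preconnected ⟨u₀, by exact_mod_cast hu₀v⟩ ⟨w₀, by exact_mod_cast hw₀v⟩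
    have walk_ind : ∀ (x y : (verts Δ : Set V))
        (_ : ((skGraph Δ).induce (verts Δ : Set V)).Walk x y) (F : Finset V),
        IsFacet Δ F → ↑x ∈ F → ∀ G, IsFacet Δ G → ↑y ∈ G →
        Relation.ReflTransGen (FStep Δ (n+1)) F G := by
      intro x y p
      induction p with
      | nil =>
        intro F hF hx G hG hy
        exact claim1 _ (hC.2 _ hF.1 _ (Finset.singleton_subset_iff.2 hx)) F G hF hG hx hy
      | @cons x z y hadj p ihp =>
        intro F hF hx G hG hy
        have hedge : ({(x : V), (z : V)} : Finset V) ∈ Δ :=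
          (show (x : V) ≠ z ∧ ({(x : V), (z : V)} : Finset V) ∈ Δ from hadj).2
        obtain ⟨H, hH, hsubH⟩ := exists_facet hedge
        have hxH : (x : V) ∈ H := hsubH (by simp)
        have hzH : (z : V) ∈ H := hsubH (by simp)
        exact (claim1 _ (hC.2 _ hF.1 _ (Finset.singleton_subset_iff.2 hx)) F H hF hH hx hxH).trans
          (ihp H hH hzH G hG hy)
    obtain ⟨p⟩ := hreach
    exact walk_ind _ _ p F hF hu₀ G hG hw₀

end SC

section Helpers4
variable {V : Type*} [DecidableEq V]

lemma verts_link_props {Δ : Finset (Finset V)} {σA : Finset V} {a : V} (hC : IsComplex Δ)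
    (hσA : σA ∈ Δ) (ha : a ∈ verts (link Δ σA)) : {a} ∪ σA ∈ Δ ∧ a ∉ σA := by
  have h1 := singleton_mem_of_mem_verts (link_complex hC hσA) ha
  have h2 := mem_link.1 h1
  exact ⟨h2.2.2, fun hc => Finset.notMem_empty a
    (h2.2.1 ▸ Finset.mem_inter.2 ⟨Finset.mem_singleton_self a, hc⟩)⟩

lemma flag_mem_link {Δ : Finset (Finset V)} {σA γ : Finset V} (hFlag : IsFlag Δ)
    (hC : IsComplex Δ) (hσA : σA ∈ Δ) (hγ : γ ∈ Δ) (hsub : γ ⊆ verts (link Δ σA)) :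
    γ ∈ link Δ σA := by
  have pairsub : ∀ u w : V, ∀ s : Finset V, u ∈ s → w ∈ s → ({u, w} : Finset V) ⊆ s :=
    fun u w s hu hw => Finset.insert_subset_iff.2 ⟨hu, Finset.singleton_subset_iff.2 hw⟩
  have hpair : ∀ u ∈ γ ∪ σA, ∀ w ∈ γ ∪ σA, ({u, w} : Finset V) ∈ Δ := by
    intro u hu w hw
    rcases Finset.mem_union.1 hu with hu | hu <;> rcases Finset.mem_union.1 hw with hw | hw
    · exact hC.2 _ hγ _ (pairsub _ _ _ hu hw)
    · exact hC.2 _ (verts_link_props hC hσA (hsub hu)).1 _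
        (pairsub _ _ _ (Finset.mem_union_left _ (Finset.mem_singleton_self u))
          (Finset.mem_union_right _ hw))
    · rw [Finset.pair_comm]
      exact hC.2 _ (verts_link_props hC hσA (hsub hw)).1 _
        (pairsub _ _ _ (Finset.mem_union_left _ (Finset.mem_singleton_self w))
          (Finset.mem_union_right _ hu))
    · exact hC.2 _ hσA _ (pairsub _ _ _ hu hw)
  have hS : γ ∪ σA ∈ Δ := hFlag _ hpair
  refine mem_link.2 ⟨hγ, ?_, hS⟩
  rw [Finset.eq_empty_iff_forall_notMem]
  intro a ha
  have h1 := Finset.mem_inter.1 ha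
  exact (verts_link_props hC hσA (hsub h1.1)).2 h1.2

lemma mem_join {Γ₁ Γ₂ : Finset (Finset V)} {γ : Finset V} :
    γ ∈ join Γ₁ Γ₂ ↔ ∃ α, α ∈ Γ₁ ∧ ∃ β, β ∈ Γ₂ ∧ α ∪ β = γ := by
  simp only [join, Finset.mem_image, Finset.mem_product, Prod.exists]
  constructor
  · rintro ⟨a, b, ⟨ha, hb⟩, h⟩; exact ⟨a, ha, b, hb, h⟩
  · rintro ⟨a, ha, b, hb, h⟩; exact ⟨a, b, ⟨ha, hb⟩, h⟩

lemma verts_join {Γ₁ Γ₂ : Finset (Finset V)} (h1 : ∅ ∈ Γ₁) (h2 : ∅ ∈ Γ₂) :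
    verts (join Γ₁ Γ₂) = verts Γ₁ ∪ verts Γ₂ := by
  ext a
  simp only [Finset.mem_union, mem_verts]
  constructor
  · rintro ⟨τ, hτ, ha⟩
    obtain ⟨α, hα, β, hβ, rfl⟩ := mem_join.1 hτ
    rcases Finset.mem_union.1 ha with h | h
    · exact Or.inl ⟨α, hα, h⟩
    · exact Or.inr ⟨β, hβ, h⟩
  · rintro (⟨τ, hτ, ha⟩ | ⟨τ, hτ, ha⟩)
    · exact ⟨τ, mem_join.2 ⟨τ, hτ, ∅, h2, Finset.union_empty τ⟩, ha⟩
    · exact ⟨τ, mem_join.2 ⟨∅, h1, τ, hτ, Finset.empty_union τ⟩, ha⟩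

end Helpers4

/-- Let `Δ` be a flag normal `(d-1)`-pseudomanifold and
`σ = σ₁ ∪ σ₂` a facet with `σ₁, σ₂` nonempty and disjoint.  Then
`V(lk(σ₁,Δ))` and `V(lk(σ₂,Δ))` are disjoint with union `V(Δ)` if and
only if `Δ = lk(σ₁,Δ) * lk(σ₂,Δ)`. -/
theorem join_of_face_links (d : ℕ) (Δ : Finset (Finset V)) (hF : IsFlag Δ)
    (hN : IsNormalPseudomanifold Δ d) (σ₁ σ₂ : Finset V)
    (h1 : σ₁.Nonempty) (h2 : σ₂.Nonempty) (hdisj : Disjoint σ₁ σ₂)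
    (hσ : IsFacet Δ (σ₁ ∪ σ₂)) :
    (Disjoint (verts (link Δ σ₁)) (verts (link Δ σ₂)) ∧
        verts (link Δ σ₁) ∪ verts (link Δ σ₂) = verts Δ) ↔
      Δ = join (link Δ σ₁) (link Δ σ₂) := by

  obtain ⟨hpm, hc0Δ, hlinks⟩ := hN
  have hC : IsComplex Δ := hpm.1
  set L₁ := link Δ σ₁ with hL₁
  set L₂ := link Δ σ₂ with hL₂
  set V₁ := verts L₁ with hV₁
  set V₂ := verts L₂ with hV₂
  have hσmem : σ₁ ∪ σ₂ ∈ Δ := hσ.1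
  have hσ1 : σ₁ ∈ Δ := hC.2 _ hσmem _ Finset.subset_union_left
  have hσ2 : σ₂ ∈ Δ := hC.2 _ hσmem _ Finset.subset_union_right
  have hd : σ₁.card + σ₂.card = d := by
    rw [← Finset.card_union_of_disjoint hdisj]; exact hpm.2.1 _ hσ
  have hd1pos : 0 < σ₁.card := Finset.card_pos.2 h1
  have hd2pos : 0 < σ₂.card := Finset.card_pos.2 h2
  have hσ1L2 : σ₁ ∈ L₂ := mem_link.2 ⟨hσ1, Finset.disjoint_iff_inter_eq_empty.1 hdisj, hσmem⟩
  have hσ2L1 : σ₂ ∈ L₁ := mem_link.2 ⟨hσ2,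
    Finset.disjoint_iff_inter_eq_empty.1 hdisj.symm, by rw [Finset.union_comm]; exact hσmem⟩
  have hσ1V2 : σ₁ ⊆ V₂ := by
    intro u hu
    refine subset_verts (mem_link.2 ⟨hC.2 _ hσ1 _ (Finset.singleton_subset_iff.2 hu), ?_, ?_⟩)
      (Finset.mem_singleton_self u)
    · rw [Finset.singleton_inter_of_notMem (Finset.disjoint_left.1 hdisj hu)]
    · exact hC.2 _ hσmem _ (Finset.union_subset
        (Finset.singleton_subset_iff.2 (Finset.mem_union_left _ hu)) Finset.subset_union_right)
  -- disjointness of the two vertex sets, unconditionally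
  have hdV : Disjoint V₁ V₂ := by
    rw [Finset.disjoint_left]
    intro v hv1 hv2
    obtain ⟨hvσ1, hvn1⟩ := verts_link_props hC hσ1 hv1
    obtain ⟨hvσ2, hvn2⟩ := verts_link_props hC hσ2 hv2
    have pairsub : ∀ u w : V, ∀ s : Finset V, u ∈ s → w ∈ s → ({u, w} : Finset V) ⊆ s :=
      fun u w s hu hw => Finset.insert_subset_iff.2 ⟨hu, Finset.singleton_subset_iff.2 hw⟩
    have hpair : ∀ u ∈ insert v (σ₁ ∪ σ₂), ∀ w ∈ insert v (σ₁ ∪ σ₂),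
        ({u, w} : Finset V) ∈ Δ := by
      have key : ∀ u ∈ insert v (σ₁ ∪ σ₂), ({v, u} : Finset V) ∈ Δ := by
        intro u hu
        rcases Finset.mem_insert.1 hu with h | h
        · subst h
          exact hC.2 _ hvσ1 _ (pairsub _ _ _
            (Finset.mem_union_left _ (Finset.mem_singleton_self u))
            (Finset.mem_union_left _ (Finset.mem_singleton_self u)))
        · rcases Finset.mem_union.1 h with h | h
          · exact hC.2 _ hvσ1 _ (pairsub _ _ _
              (Finset.mem_union_left _ (Finset.mem_singleton_self v))
              (Finset.mem_union_right _ h))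
          · exact hC.2 _ hvσ2 _ (pairsub _ _ _
              (Finset.mem_union_left _ (Finset.mem_singleton_self v))
              (Finset.mem_union_right _ h))
      intro u hu w hw
      rcases Finset.mem_insert.1 hu with h | h
      · subst h; exact key w hw
      · rcases Finset.mem_insert.1 hw with h2 | h2
        · subst h2
          rw [Finset.pair_comm]
          exact key u (Finset.mem_insert_of_mem h)
        · exact hC.2 _ hσmem _ (pairsub _ _ _ h h2)
    have hS : insert v (σ₁ ∪ σ₂) ∈ Δ := hF _ hpair
    have := hσ.2 _ hS (Finset.subset_insert _ _)
    have hvin : v ∈ σ₁ ∪ σ₂ := this ▸ Finset.mem_insert_self v _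
    rcases Finset.mem_union.1 hvin with h | h
    · exact hvn1 h
    · exact hvn2 h
  constructor
  · -- hard direction
    rintro ⟨_, hunion⟩
    -- decomposition of faces
    have hparts : ∀ H ∈ Δ, H ∩ V₁ ∈ L₁ ∧ H ∩ V₂ ∈ L₂ ∧ H = (H ∩ V₁) ∪ (H ∩ V₂) := by
      intro H hH
      refine ⟨flag_mem_link hF hC hσ1 (hC.2 _ hH _ Finset.inter_subset_left)
          Finset.inter_subset_right,
        flag_mem_link hF hC hσ2 (hC.2 _ hH _ Finset.inter_subset_left)
          Finset.inter_subset_right, ?_⟩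
      rw [← Finset.inter_union_distrib_left, hunion,
        Finset.inter_eq_left.2 (subset_verts hH)]
    have hcard1 : ∀ τ ∈ L₁, τ.card ≤ σ₂.card := by
      intro τ hτ
      have hm := mem_link.1 hτ
      have := card_le_of_mem hpm hm.2.2
      rw [Finset.card_union_of_disjoint (Finset.disjoint_iff_inter_eq_empty.2 hm.2.1)] at this
      omega
    have hcard2 : ∀ τ ∈ L₂, τ.card ≤ σ₁.card := by
      intro τ hτ
      have hm := mem_link.1 hτ
      have := card_le_of_mem hpm hm.2.2
      rw [Finset.card_union_of_disjoint (Finset.disjoint_iff_inter_eq_empty.2 hm.2.1)] at this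
      omega
    have hfacetparts : ∀ H ∈ Δ, H.card = d →
        (H ∩ V₁).card = σ₂.card ∧ (H ∩ V₂).card = σ₁.card := by
      intro H hH hHc
      obtain ⟨hp1, hp2, hp3⟩ := hparts H hH
      have hdisjH : Disjoint (H ∩ V₁) (H ∩ V₂) :=
        hdV.mono Finset.inter_subset_right Finset.inter_subset_right
      have hsum : (H ∩ V₁).card + (H ∩ V₂).card = d := by
        rw [← Finset.card_union_of_disjoint hdisjH, ← hp3, hHc]
      have := hcard1 _ hp1
      have := hcard2 _ hp2
      omega
    -- the link of σ₂ is a pseudomanifold of "dimension" σ₁.card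
    have hL2pm : IsPseudomanifold L₂ σ₁.card := by
      have := link_pm hpm hσ2 (by omega)
      have e : d - σ₂.card = σ₁.card := by omega
      rwa [e] at this
    have hconnL2 : ∀ τ ∈ L₂, τ.card + 2 ≤ σ₁.card → ConnOn (link L₂ τ) := by
      intro τ hτ hcard
      have hm := mem_link.1 hτ
      rw [hL₂, link_link hC hm.2.1]
      apply hlinks
      · rw [Finset.union_comm]; exact hm.2.2
      · have : (σ₂ ∪ τ).card = σ₂.card + τ.card := by
          rw [Finset.card_union_of_disjoint]
          exact (Finset.disjoint_iff_inter_eq_empty.2 hm.2.1).symm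
        omega
    have hc0L2 : 2 ≤ σ₁.card → ConnOn L₂ := fun hge => hlinks σ₂ hσ2 (by omega)
    have hσ1facet : IsFacet L₂ σ₁ := facet_of_card hL2pm hσ1L2 rfl
    -- prove the two inclusions
    apply Finset.Subset.antisymm
    · intro γ hγ
      obtain ⟨hp1, hp2, hp3⟩ := hparts γ hγ
      exact mem_join.2 ⟨γ ∩ V₁, hp1, γ ∩ V₂, hp2, hp3.symm⟩
    · intro γ hγ
      obtain ⟨α, hα, β, hβ, rfl⟩ := mem_join.1 hγ
      -- extend α to a "facet part"
      have hαm := mem_link.1 hα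
      obtain ⟨F, hFfac, hFsub⟩ := exists_facet hαm.2.2
      have hFcard : F.card = d := hpm.2.1 _ hFfac
      obtain ⟨hq1, hq2, hq3⟩ := hparts F hFfac.1
      obtain ⟨hq4, hq5⟩ := hfacetparts F hFfac.1 hFcard
      have hσ1F : σ₁ ⊆ F := Finset.subset_union_right.trans hFsub
      have hFV2 : F ∩ V₂ = σ₁ := by
        have hsub2 : σ₁ ⊆ F ∩ V₂ := fun u hu => Finset.mem_inter.2 ⟨hσ1F hu, hσ1V2 hu⟩
        exact (Finset.eq_of_subset_of_card_le hsub2 (by omega)).symm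
      have hFeq : F ∩ V₁ ∪ σ₁ = F := by rw [← hFV2, ← hq3]
      -- extend β to a facet of L₂
      have hβm := mem_link.1 hβ
      obtain ⟨G, hGfac, hGsub⟩ := exists_facet hβm.2.2
      have hGcard : G.card = d := hpm.2.1 _ hGfac
      obtain ⟨hr1, hr2, hr3⟩ := hparts G hGfac.1
      obtain ⟨hr4, hr5⟩ := hfacetparts G hGfac.1 hGcard
      have hGV2facet : IsFacet L₂ (G ∩ V₂) := facet_of_card hL2pm hr2 hr5
      -- walk from σ₁ to G ∩ V₂ inside L₂
      have hwalk := strong_conn σ₁.card L₂ hL2pm hconnL2 hc0L2 σ₁ (G ∩ V₂) hσ1facet hGV2facet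
      have main : ∀ b, Relation.ReflTransGen (FStep L₂ σ₁.card) σ₁ b →
          F ∩ V₁ ∪ b ∈ Δ ∧ b ∈ L₂ ∧ b.card = σ₁.card := by
        intro b hb
        induction hb with
        | refl => exact ⟨by rw [hFeq]; exact hFfac.1, hσ1L2, rfl⟩
        | @tail b c _ hstep ihw =>
          obtain ⟨hbΔ, hbL, hbcard⟩ := ihw
          obtain ⟨hcL, hccard, hint⟩ := hstep
          refine ⟨?_, hcL, hccard⟩
          by_cases hbc : b = c
          · rwa [← hbc]
          -- the shared ridge
          have hbcne : (b ∩ c).card + 1 = σ₁.card := by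
            have hle : (b ∩ c).card ≤ σ₁.card := hbcard ▸ Finset.card_le_card
              Finset.inter_subset_left
            rcases Nat.lt_or_ge (b ∩ c).card σ₁.card with hlt | hge
            · omega
            · exfalso
              have : b ∩ c = b := Finset.eq_of_subset_of_card_le
                Finset.inter_subset_left (by omega)
              exact hbc (Finset.eq_of_subset_of_card_le
                (by rw [← this]; exact Finset.inter_subset_right) (by omega))
          have hρL : b ∩ c ∈ L₂ := (link_complex hC hσ2).2 _ hbL _ Finset.inter_subset_left
          have hρcard : (b ∩ c).card = σ₁.card - 1 := by omega
          have hSL2 := hL2pm.2.2 _ hρL hρcard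
          -- the ridge in Δ
          have hbV2 : b ⊆ V₂ := subset_verts hbL
          have hcV2 : c ⊆ V₂ := subset_verts hcL
          have hdisjR : Disjoint (F ∩ V₁) (b ∩ c) :=
            hdV.mono Finset.inter_subset_right (Finset.inter_subset_left.trans hbV2)
          have hRΔ : F ∩ V₁ ∪ b ∩ c ∈ Δ := hC.2 _ hbΔ _
            (Finset.union_subset_union_right Finset.inter_subset_left)
          have hRcard : (F ∩ V₁ ∪ b ∩ c).card = d - 1 := by
            rw [Finset.card_union_of_disjoint hdisjR, hq4]; omega
          have hSΔ := hpm.2.2 _ hRΔ hRcard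
          have hmemb : F ∩ V₁ ∪ b ∈ Δ.filter
              (fun s => s.card = d ∧ F ∩ V₁ ∪ b ∩ c ⊆ s) := by
            refine Finset.mem_filter.2 ⟨hbΔ, ?_, Finset.union_subset_union_right
              Finset.inter_subset_left⟩
            rw [Finset.card_union_of_disjoint (hdV.mono Finset.inter_subset_right hbV2), hq4]
            omega
          -- the other facet across the ridge
          have final : ∀ G', G' ∈ Δ → G'.card = d → F ∩ V₁ ∪ b ∩ c ⊆ G' →
              G' ≠ F ∩ V₁ ∪ b → F ∩ V₁ ∪ c ∈ Δ := by
            intro G' hG' hG'c hRG' hne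
            obtain ⟨hp1', hp2', hp3'⟩ := hparts G' hG'
            obtain ⟨hp4', hp5'⟩ := hfacetparts G' hG' hG'c
            have hGV1 : G' ∩ V₁ = F ∩ V₁ := by
              have hs : F ∩ V₁ ⊆ G' ∩ V₁ := fun u hu => Finset.mem_inter.2
                ⟨hRG' (Finset.mem_union_left _ hu), (Finset.mem_inter.1 hu).2⟩
              exact (Finset.eq_of_subset_of_card_le hs (by omega)).symm
            have hρG2 : b ∩ c ⊆ G' ∩ V₂ := fun u hu => Finset.mem_inter.2
              ⟨hRG' (Finset.mem_union_right _ hu), hbV2 (Finset.mem_inter.1 hu).1⟩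
            have hG2mem : G' ∩ V₂ ∈ L₂.filter
                (fun s => s.card = σ₁.card ∧ b ∩ c ⊆ s) :=
              Finset.mem_filter.2 ⟨hp2', hp5', hρG2⟩
            have hbmem : b ∈ L₂.filter (fun s => s.card = σ₁.card ∧ b ∩ c ⊆ s) :=
              Finset.mem_filter.2 ⟨hbL, hbcard, Finset.inter_subset_left⟩
            have hcmem : c ∈ L₂.filter (fun s => s.card = σ₁.card ∧ b ∩ c ⊆ s) :=
              Finset.mem_filter.2 ⟨hcL, hccard, Finset.inter_subset_right⟩
            have hpairsub : ({b, c} : Finset (Finset V)) ⊆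
                L₂.filter (fun s => s.card = σ₁.card ∧ b ∩ c ⊆ s) := by
              intro x hx
              rcases Finset.mem_insert.1 hx with rfl | hx
              · exact hbmem
              · rw [Finset.mem_singleton.1 hx]; exact hcmem
            have heq2 : ({b, c} : Finset (Finset V)) =
                L₂.filter (fun s => s.card = σ₁.card ∧ b ∩ c ⊆ s) :=
              Finset.eq_of_subset_of_card_le hpairsub (by rw [hSL2, Finset.card_pair hbc])
            have : G' ∩ V₂ ∈ ({b, c} : Finset (Finset V)) := heq2 ▸ hG2mem
            rcases Finset.mem_insert.1 this with h | h
            · exact absurd (by rw [hp3', hGV1, h]) hne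
            · rw [Finset.mem_singleton.1 h, hGV1] at hp3'
              exact hp3' ▸ hG'
          obtain ⟨x, y, hxy, hSeq⟩ := Finset.card_eq_two.1 hSΔ
          have hxm : x ∈ Δ.filter (fun s => s.card = d ∧ F ∩ V₁ ∪ b ∩ c ⊆ s) := by
            rw [hSeq]; exact Finset.mem_insert_self x _
          have hym : y ∈ Δ.filter (fun s => s.card = d ∧ F ∩ V₁ ∪ b ∩ c ⊆ s) := by
            rw [hSeq]; exact Finset.mem_insert.2 (Or.inr (Finset.mem_singleton_self y))
          rw [hSeq] at hmemb
          simp only [Finset.mem_filter] at hxm hym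
          rcases Finset.mem_insert.1 hmemb with h | h
          · exact final y hym.1 hym.2.1 hym.2.2 (by rw [h]; exact hxy.symm)
          · rw [Finset.mem_singleton] at h
            exact final x hxm.1 hxm.2.1 hxm.2.2 (by rw [h]; exact hxy)
      have hfin := (main _ hwalk).1
      refine hC.2 _ hfin _ (Finset.union_subset_union ?_ ?_)
      · intro u hu
        exact Finset.mem_inter.2 ⟨hFsub (Finset.mem_union_left _ hu), subset_verts hα hu⟩
      · intro u hu
        exact Finset.mem_inter.2 ⟨hGsub (Finset.mem_union_left _ hu), subset_verts hβ hu⟩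
  · -- easy direction
    intro hJ
    refine ⟨hdV, ?_⟩
    conv_rhs => rw [hJ]
    rw [verts_join (link_complex hC hσ1).1 (link_complex hC hσ2).1]
end

section
/- Let d ≥ 3, let Δ be a flag (d−1)-dimensional pseudomanifold, and let σ be a facet of Δ. Then Σ_{τ⊆σ, |τ|=d−2} f₀(lk(τ,Δ)) = |∪_{τ⊆σ, |τ|=d−2} V(lk(τ,Δ))| + 2d(d−2), where the sum and union range over all subsets τ of σ of cardinality d−2. -/
open Finset

variable {V : Type*} [DecidableEq V]

lemma singleton_mem_link' {Δ : Finset (Finset V)} (hC : IsComplex Δ) (τ : Finset V) (v : V) :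
    ({v} : Finset V) ∈ link Δ τ ↔ v ∉ τ ∧ insert v τ ∈ Δ := by
  simp only [link, Finset.mem_filter, show ({v} : Finset V) ∪ τ = insert v τ from by ext x; simp [or_comm]]
  constructor
  · rintro ⟨-, hint, hins⟩
    refine ⟨fun hvτ => ?_, hins⟩
    have : v ∈ ({v} : Finset V) ∩ τ := Finset.mem_inter.2 ⟨Finset.mem_singleton_self v, hvτ⟩
    simp [hint] at this
  · rintro ⟨hvτ, hins⟩
    exact ⟨hC.2 _ hins {v} (by simp), Finset.singleton_inter_of_notMem hvτ, hins⟩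

lemma mem_verts_link' {Δ : Finset (Finset V)} (hC : IsComplex Δ) (τ : Finset V) (v : V) :
    v ∈ verts (link Δ τ) ↔ v ∉ τ ∧ insert v τ ∈ Δ := by
  constructor
  · intro hv
    rw [verts, Finset.mem_sup] at hv
    obtain ⟨ρ, hρ, hvρ⟩ := hv
    simp only [link, Finset.mem_filter] at hρ
    obtain ⟨hρΔ, hint, hun⟩ := hρ
    refine ⟨fun hvτ => ?_, hC.2 _ hun _ ?_⟩
    · have : v ∈ ρ ∩ τ := Finset.mem_inter.2 ⟨hvρ, hvτ⟩
      simp [hint] at this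
    · intro x hx
      rcases Finset.mem_insert.1 hx with rfl | hx
      · exact Finset.mem_union_left _ hvρ
      · exact Finset.mem_union_right _ hx
  · intro h
    rw [verts, Finset.mem_sup]
    exact ⟨{v}, (singleton_mem_link' hC τ v).2 h, Finset.mem_singleton_self v⟩

lemma fNum_link_zero' {Δ : Finset (Finset V)} (hC : IsComplex Δ) (τ : Finset V) :
    fNum (link Δ τ) 0 = (verts (link Δ τ)).card := by
  have himg : (link Δ τ).filter (fun ρ => ρ.card = 0 + 1)
      = (verts (link Δ τ)).image (fun v => ({v} : Finset V)) := by
    ext ρ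
    simp only [Finset.mem_filter, Finset.mem_image, zero_add]
    constructor
    · rintro ⟨hρ, hcard⟩
      obtain ⟨v, rfl⟩ := Finset.card_eq_one.1 hcard
      refine ⟨v, ?_, rfl⟩
      rw [mem_verts_link' hC]
      exact (singleton_mem_link' hC τ v).1 hρ
    · rintro ⟨v, hv, rfl⟩
      rw [mem_verts_link' hC] at hv
      exact ⟨(singleton_mem_link' hC τ v).2 hv, Finset.card_singleton v⟩
  rw [fNum, himg, Finset.card_image_of_injective]
  intro a b hab
  simpa using hab

lemma flag_insert' {Δ : Finset (Finset V)} (hC : IsComplex Δ) (hF : IsFlag Δ)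
    {τ : Finset V} (hτ : τ ∈ Δ) {v : V} (hv : ({v} : Finset V) ∈ Δ)
    (h : ∀ u ∈ τ, ({v, u} : Finset V) ∈ Δ) : insert v τ ∈ Δ := by
  apply hF
  intro a ha b hb
  rcases Finset.mem_insert.1 ha with ha' | ha' <;> rcases Finset.mem_insert.1 hb with hb' | hb'
  · rw [ha', hb']; simpa using hv
  · rw [ha']; exact h b hb'
  · rw [hb', Finset.pair_comm]; exact h a ha'
  · exact hC.2 τ hτ _ (Finset.insert_subset ha' (Finset.singleton_subset_iff.2 hb'))

/-- Let `d ≥ 3`, let `Δ` be a flag `(d-1)`-pseudomanifold and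
`σ` a facet.  Then `Σ_{τ ⊆ σ, |τ| = d-2} f₀(lk(τ,Δ))
= |∪_{τ ⊆ σ, |τ| = d-2} V(lk(τ,Δ))| + 2d(d-2)`. -/
theorem sum_of_codim_two_face_links (d : ℕ) (hd : 3 ≤ d) (Δ : Finset (Finset V))
    (hF : IsFlag Δ) (hP : IsPseudomanifold Δ d) (σ : Finset V) (hσ : IsFacet Δ σ) :
    ∑ τ ∈ σ.powersetCard (d - 2), fNum (link Δ τ) 0 =
      ((σ.powersetCard (d - 2)).biUnion fun τ => verts (link Δ τ)).card
        + 2 * d * (d - 2) := by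
  obtain ⟨hC, hpure, hridge⟩ := hP
  obtain ⟨e, rfl⟩ : ∃ e, d = e + 2 := ⟨d - 2, by omega⟩
  have hσΔ : σ ∈ Δ := hσ.1
  have hσcard : σ.card = e + 2 := hpure σ hσ
  simp only [Nat.add_sub_cancel]
  set S := σ.powersetCard e with hSdef
  set U := S.biUnion (fun τ => verts (link Δ τ)) with hUdef
  -- every vertex of `U` is a vertex of `Δ`
  have hUv : ∀ v ∈ U, ({v} : Finset V) ∈ Δ := by
    intro v hv
    obtain ⟨τ, hτ, hv⟩ := Finset.mem_biUnion.1 hv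
    rw [mem_verts_link' hC] at hv
    exact hC.2 _ hv.2 {v} (Finset.singleton_subset_iff.2 (Finset.mem_insert_self v τ))
  -- the neighbourhood of `v` inside `σ`
  set N : V → Finset V := fun v => σ.filter (fun u => ({v, u} : Finset V) ∈ Δ) with hNdef
  have hNsub : ∀ v, N v ⊆ σ := fun v => Finset.filter_subset _ _
  -- σ ⊆ U
  have hσU : σ ⊆ U := by
    intro v hv
    obtain ⟨τ, hτsub, hτcard⟩ := Finset.exists_subset_card_eq
      (show e ≤ (σ.erase v).card by rw [Finset.card_erase_of_mem hv, hσcard]; omega)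
    have hτσ : τ ⊆ σ := hτsub.trans (Finset.erase_subset _ _)
    have hvτ : v ∉ τ := fun h => (Finset.mem_erase.1 (hτsub h)).1 rfl
    refine Finset.mem_biUnion.2 ⟨τ, Finset.mem_powersetCard.2 ⟨hτσ, hτcard⟩, ?_⟩
    rw [mem_verts_link' hC]
    exact ⟨hvτ, hC.2 σ hσΔ _ (Finset.insert_subset hv hτσ)⟩
  -- multiplicity of a vertex of σ
  have multσ : ∀ v ∈ σ, S.filter (fun τ => v ∈ verts (link Δ τ))
      = (σ.erase v).powersetCard e := by
    intro v hv
    ext τ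
    simp only [Finset.mem_filter, hSdef, Finset.mem_powersetCard, mem_verts_link' hC]
    constructor
    · rintro ⟨⟨hτσ, hcard⟩, hvτ, -⟩
      exact ⟨Finset.subset_erase.2 ⟨hτσ, hvτ⟩, hcard⟩
    · rintro ⟨hτ, hcard⟩
      have hτσ : τ ⊆ σ := hτ.trans (Finset.erase_subset _ _)
      have hvτ : v ∉ τ := fun h => (Finset.mem_erase.1 (hτ h)).1 rfl
      exact ⟨⟨hτσ, hcard⟩, hvτ, hC.2 σ hσΔ _ (Finset.insert_subset hv hτσ)⟩
  -- multiplicity of a vertex outside σ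
  have multout : ∀ v ∈ U, v ∉ σ → S.filter (fun τ => v ∈ verts (link Δ τ))
      = (N v).powersetCard e := by
    intro v hvU hvσ
    ext τ
    simp only [Finset.mem_filter, hSdef, Finset.mem_powersetCard, mem_verts_link' hC]
    constructor
    · rintro ⟨⟨hτσ, hcard⟩, hvτ, hins⟩
      refine ⟨fun u hu => Finset.mem_filter.2 ⟨hτσ hu, ?_⟩, hcard⟩
      exact hC.2 _ hins _ (Finset.insert_subset (Finset.mem_insert_self v τ)
        (Finset.singleton_subset_iff.2 (Finset.mem_insert_of_mem hu)))
    · rintro ⟨hτN, hcard⟩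
      have hτσ : τ ⊆ σ := hτN.trans (hNsub v)
      have hvτ : v ∉ τ := fun h => hvσ (hτσ h)
      refine ⟨⟨hτσ, hcard⟩, hvτ, flag_insert' hC hF (hC.2 σ hσΔ τ hτσ) (hUv v hvU) ?_⟩
      intro u hu
      exact (Finset.mem_filter.1 (hτN hu)).2
  -- the neighbourhood of an outside vertex has at most e+1 elements
  have hNle : ∀ v ∈ U, v ∉ σ → (N v).card ≤ e + 1 := by
    intro v hvU hvσ
    by_contra hlt
    push_neg at hlt
    have hNσ : N v = σ := Finset.eq_of_subset_of_card_le (hNsub v) (by omega)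
    have hins : insert v σ ∈ Δ := by
      refine flag_insert' hC hF hσΔ (hUv v hvU) ?_
      intro u hu
      have : u ∈ N v := hNσ ▸ hu
      exact (Finset.mem_filter.1 this).2
    have := hσ.2 _ hins (Finset.subset_insert v σ)
    exact hvσ (this ▸ Finset.mem_insert_self v σ)
  -- every vertex of U has positive multiplicity
  have hpos : ∀ v ∈ U, 1 ≤ (S.filter (fun τ => v ∈ verts (link Δ τ))).card := by
    intro v hv
    obtain ⟨τ, hτ, hvτ⟩ := Finset.mem_biUnion.1 hv
    exact Finset.card_pos.2 ⟨τ, Finset.mem_filter.2 ⟨hτ, hvτ⟩⟩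
  -- the exceptional set T
  set T := (U \ σ).filter (fun v => (N v).card = e + 1) with hTdef
  have hTU : T ⊆ U \ σ := Finset.filter_subset _ _
  -- ridge counting: for τ' ⊆ σ of card e+1, the faces of card e+2 containing τ'
  have hridge' : ∀ τ' ⊆ σ, τ'.card = e + 1 →
      (Δ.filter (fun ρ => ρ.card = e + 2 ∧ τ' ⊆ ρ)).card = 2 := by
    intro τ' hτ'σ hτ'card
    have := hridge τ' (hC.2 σ hσΔ τ' hτ'σ) (by omega)
    simpa using this
  have hσD : ∀ τ' ⊆ σ, σ ∈ Δ.filter (fun ρ => ρ.card = e + 2 ∧ τ' ⊆ ρ) := by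
    intro τ' hτ'σ
    exact Finset.mem_filter.2 ⟨hσΔ, hσcard, hτ'σ⟩
  -- an outside vertex with full neighbourhood yields a face
  have hinsmem : ∀ v ∈ U, ∀ τ' ⊆ N v, insert v τ' ∈ Δ := by
    intro v hvU τ' hτ'N
    refine flag_insert' hC hF (hC.2 σ hσΔ τ' (hτ'N.trans (hNsub v))) (hUv v hvU) ?_
    intro u hu
    exact (Finset.mem_filter.1 (hτ'N hu)).2
  -- T is in bijection with the (e+1)-subsets of σ
  have hTcard : T.card = e + 2 := by
    have hbij : T.card = (σ.powersetCard (e + 1)).card := by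
      apply Finset.card_bij (fun v _ => N v)
      · intro v hv
        obtain ⟨hvUσ, hNv⟩ := Finset.mem_filter.1 hv
        exact Finset.mem_powersetCard.2 ⟨hNsub v, hNv⟩
      · intro v₁ hv₁ v₂ hv₂ hNeq
        by_contra hne
        obtain ⟨hv₁Uσ, hN₁⟩ := Finset.mem_filter.1 hv₁
        obtain ⟨hv₂Uσ, hN₂⟩ := Finset.mem_filter.1 hv₂
        obtain ⟨hv₁U, hv₁σ⟩ := Finset.mem_sdiff.1 hv₁Uσ
        obtain ⟨hv₂U, hv₂σ⟩ := Finset.mem_sdiff.1 hv₂Uσ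
        set τ' := N v₁ with hτ'def
        have hτ'σ : τ' ⊆ σ := hNsub v₁
        have h1 : insert v₁ τ' ∈ Δ := hinsmem v₁ hv₁U τ' Finset.Subset.rfl
        have h2 : insert v₂ τ' ∈ Δ := hinsmem v₂ hv₂U τ' (fun x hx => hNeq ▸ hx)
        have hv₁τ' : v₁ ∉ τ' := fun h => hv₁σ (hτ'σ h)
        have hv₂τ' : v₂ ∉ τ' := fun h => hv₂σ (hτ'σ h)
        have hm1 : insert v₁ τ' ∈ Δ.filter (fun ρ => ρ.card = e + 2 ∧ τ' ⊆ ρ) :=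
          Finset.mem_filter.2 ⟨h1, by rw [Finset.card_insert_of_notMem hv₁τ', hN₁],
            Finset.subset_insert _ _⟩
        have hm2 : insert v₂ τ' ∈ Δ.filter (fun ρ => ρ.card = e + 2 ∧ τ' ⊆ ρ) :=
          Finset.mem_filter.2 ⟨h2, by rw [Finset.card_insert_of_notMem hv₂τ', hN₁],
            Finset.subset_insert _ _⟩
        have hmσ := hσD τ' hτ'σ
        have hd1 : σ ≠ insert v₁ τ' := fun h => hv₁σ (h ▸ Finset.mem_insert_self v₁ τ')
        have hd2 : σ ≠ insert v₂ τ' := fun h => hv₂σ (h ▸ Finset.mem_insert_self v₂ τ')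
        have hd3 : insert v₁ τ' ≠ insert v₂ τ' := by
          intro h
          have : v₁ ∈ insert v₂ τ' := h ▸ Finset.mem_insert_self v₁ τ'
          rcases Finset.mem_insert.1 this with h' | h'
          · exact hne h'
          · exact hv₁τ' h'
        have hsub : ({σ, insert v₁ τ', insert v₂ τ'} : Finset (Finset V))
            ⊆ Δ.filter (fun ρ => ρ.card = e + 2 ∧ τ' ⊆ ρ) := by
          intro x hx
          rcases Finset.mem_insert.1 hx with rfl | hx
          · exact hmσ
          rcases Finset.mem_insert.1 hx with rfl | hx
          · exact hm1
          · exact Finset.mem_singleton.1 hx ▸ hm2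
        have h3 : ({σ, insert v₁ τ', insert v₂ τ'} : Finset (Finset V)).card = 3 := by
          rw [Finset.card_insert_of_notMem (by simp [hd1, hd2]),
            Finset.card_insert_of_notMem (by simp [hd3]), Finset.card_singleton]
        have := Finset.card_le_card hsub
        rw [h3, hridge' τ' hτ'σ hN₁] at this
        omega
      · intro τ' hτ'
        obtain ⟨hτ'σ, hτ'card⟩ := Finset.mem_powersetCard.1 hτ'
        have hDcard := hridge' τ' hτ'σ hτ'card
        have hσmem := hσD τ' hτ'σ
        obtain ⟨ρ, hρD, hρne⟩ : ∃ ρ ∈ Δ.filter (fun ρ => ρ.card = e + 2 ∧ τ' ⊆ ρ), ρ ≠ σ := by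
          by_contra hcon
          push_neg at hcon
          have : Δ.filter (fun ρ => ρ.card = e + 2 ∧ τ' ⊆ ρ) ⊆ {σ} := by
            intro x hx
            exact Finset.mem_singleton.2 (hcon x hx)
          have := Finset.card_le_card this
          simp [hDcard] at this
        obtain ⟨hρΔ, hρcard, hτ'ρ⟩ := Finset.mem_filter.1 hρD
        have hsdcard : (ρ \ τ').card = 1 := by
          rw [Finset.card_sdiff_of_subset hτ'ρ, hρcard, hτ'card]; omega
        obtain ⟨v, hveq⟩ := Finset.card_eq_one.1 hsdcard
        have hvρ : v ∈ ρ := (Finset.mem_sdiff.1 (hveq ▸ Finset.mem_singleton_self v)).1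
        have hvτ' : v ∉ τ' := (Finset.mem_sdiff.1 (hveq ▸ Finset.mem_singleton_self v)).2
        have hρeq : ρ = insert v τ' := by
          have : τ' ∪ ρ \ τ' = ρ := Finset.union_sdiff_of_subset hτ'ρ
          rw [hveq] at this
          rw [← this]; ext x; simp [or_comm]
        have hvσ : v ∉ σ := by
          intro hvσ
          have hρσ : ρ ⊆ σ := by
            rw [hρeq]
            exact Finset.insert_subset hvσ hτ'σ
          exact hρne (Finset.eq_of_subset_of_card_le hρσ (by omega))
        -- v ∈ U
        obtain ⟨τ₀, hτ₀sub, hτ₀card⟩ := Finset.exists_subset_card_eq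
          (show e ≤ τ'.card by omega)
        have hτ₀σ : τ₀ ⊆ σ := hτ₀sub.trans hτ'σ
        have hvU : v ∈ U := by
          refine Finset.mem_biUnion.2 ⟨τ₀, Finset.mem_powersetCard.2 ⟨hτ₀σ, hτ₀card⟩, ?_⟩
          rw [mem_verts_link' hC]
          refine ⟨fun h => hvσ (hτ₀σ h), hC.2 ρ hρΔ _ ?_⟩
          exact Finset.insert_subset hvρ (hτ₀sub.trans hτ'ρ)
        -- τ' ⊆ N v
        have hτ'N : τ' ⊆ N v := by
          intro u hu
          refine Finset.mem_filter.2 ⟨hτ'σ hu, hC.2 ρ hρΔ _ ?_⟩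
          exact Finset.insert_subset hvρ (Finset.singleton_subset_iff.2 (hτ'ρ hu))
        have hNcard : (N v).card = e + 1 := by
          have h1 := Finset.card_le_card hτ'N
          have h2 := hNle v hvU hvσ
          omega
        have hNeq : N v = τ' := (Finset.eq_of_subset_of_card_le hτ'N (by omega)).symm
        exact ⟨v, Finset.mem_filter.2 ⟨Finset.mem_sdiff.2 ⟨hvU, hvσ⟩, hNcard⟩, hNeq⟩
    rw [hbij, Finset.card_powersetCard, hσcard, Nat.choose_succ_self_right]
  -- multiplicity formula
  have hmult : ∀ v ∈ U, (S.filter (fun τ => v ∈ verts (link Δ τ))).card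
      = 1 + (if v ∈ σ ∪ T then e else 0) := by
    intro v hvU
    by_cases hvσ : v ∈ σ
    · rw [multσ v hvσ, Finset.card_powersetCard, Finset.card_erase_of_mem hvσ, hσcard,
        show e + 2 - 1 = e + 1 from by omega, Nat.choose_succ_self_right]
      simp [Finset.mem_union, hvσ, Nat.add_comm]
    · rw [multout v hvU hvσ, Finset.card_powersetCard]
      by_cases hvT : v ∈ T
      · have hNcard : (N v).card = e + 1 := (Finset.mem_filter.1 hvT).2
        rw [hNcard, Nat.choose_succ_self_right]
        simp [Finset.mem_union, hvT, Nat.add_comm]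
      · have hNne : (N v).card ≠ e + 1 := by
          intro h
          exact hvT (Finset.mem_filter.2 ⟨Finset.mem_sdiff.2 ⟨hvU, hvσ⟩, h⟩)
        have hNle' : (N v).card ≤ e := by
          have := hNle v hvU hvσ
          omega
        have hp := hpos v hvU
        rw [multout v hvU hvσ, Finset.card_powersetCard] at hp
        have hNe : (N v).card = e := by
          rcases Nat.lt_or_ge (N v).card e with h | h
          · rw [Nat.choose_eq_zero_of_lt h] at hp; omega
          · omega
        rw [hNe, Nat.choose_self]
        simp [Finset.mem_union, hvσ, hvT]
  -- the double count
  have step1 : ∑ τ ∈ S, (verts (link Δ τ)).card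
      = ∑ v ∈ U, (S.filter (fun τ => v ∈ verts (link Δ τ))).card := by
    calc ∑ τ ∈ S, (verts (link Δ τ)).card
        = ∑ τ ∈ S, ∑ v ∈ U, (if v ∈ verts (link Δ τ) then 1 else 0) := by
          refine Finset.sum_congr rfl fun τ hτ => ?_
          rw [← Finset.card_filter, Finset.filter_mem_eq_inter,
            Finset.inter_eq_right.2 (Finset.subset_biUnion_of_mem _ hτ)]
      _ = ∑ v ∈ U, ∑ τ ∈ S, (if v ∈ verts (link Δ τ) then 1 else 0) := Finset.sum_comm
      _ = ∑ v ∈ U, (S.filter (fun τ => v ∈ verts (link Δ τ))).card := by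
          refine Finset.sum_congr rfl fun v hv => ?_
          rw [Finset.card_filter]
  have hTσdisj : Disjoint σ T := by
    rw [Finset.disjoint_right]
    intro v hvT hvσ
    exact (Finset.mem_sdiff.1 (hTU hvT)).2 hvσ
  have hσTU : σ ∪ T ⊆ U := Finset.union_subset hσU (hTU.trans (Finset.sdiff_subset))
  calc ∑ τ ∈ S, fNum (link Δ τ) 0
      = ∑ τ ∈ S, (verts (link Δ τ)).card :=
        Finset.sum_congr rfl fun τ _ => fNum_link_zero' hC τ
    _ = ∑ v ∈ U, (S.filter (fun τ => v ∈ verts (link Δ τ))).card := step1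
    _ = ∑ v ∈ U, (1 + (if v ∈ σ ∪ T then e else 0)) := Finset.sum_congr rfl hmult
    _ = U.card + (σ ∪ T).card * e := by
        rw [Finset.sum_add_distrib, Finset.sum_const, smul_eq_mul, mul_one,
          Finset.sum_ite_mem, Finset.inter_eq_right.2 hσTU, Finset.sum_const, smul_eq_mul]
    _ = U.card + 2 * (e + 2) * e := by
        rw [Finset.card_union_of_disjoint hTσdisj, hσcard, hTcard]
        ring
end

section
/- Let m ≥ 2, let Δ be a flag (2m−1)-dimensional pseudomanifold, and let σ be a facet of Δ. Then for every k with 1 < k ≤ 2m−2, a_k = C(2m−2,k) · a_{2m−2} − 4m(2m−2−k) · C(2m−1,k) + Σ_{i=k}^{2m−3} C(i,k) · b_i, where C(a,b) is the binomial coefficient. -/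
open Finset

variable {V : Type*} [DecidableEq V]

namespace AkAux

variable {V : Type*} [DecidableEq V]

/-- The non-neighbors of `w` inside `σ`. -/
def NN (Δ : Finset (Finset V)) (σ : Finset V) (w : V) : Finset V :=
  σ.filter fun u => ({w, u} : Finset V) ∉ Δ

lemma mem_NN {Δ : Finset (Finset V)} {σ : Finset V} {w u : V} :
    u ∈ NN Δ σ w ↔ u ∈ σ ∧ ({w, u} : Finset V) ∉ Δ := Finset.mem_filter

lemma NN_subset {Δ : Finset (Finset V)} {σ : Finset V} {w : V} : NN Δ σ w ⊆ σ :=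
  Finset.filter_subset _ _

lemma mem_verts {Δ : Finset (Finset V)} {w : V} :
    w ∈ verts Δ ↔ ∃ ρ ∈ Δ, w ∈ ρ := by
  simp [verts, Finset.mem_sup]

lemma singleton_mem_iff {Δ : Finset (Finset V)} (hC : IsComplex Δ) {w : V} :
    ({w} : Finset V) ∈ Δ ↔ w ∈ verts Δ := by
  constructor
  · intro h; exact mem_verts.2 ⟨{w}, h, by simp⟩
  · intro h
    obtain ⟨ρ, hρ, hw⟩ := mem_verts.1 h
    exact hC.2 ρ hρ {w} (by simpa using hw)

lemma pair_mem_of_subset {Δ : Finset (Finset V)} (hC : IsComplex Δ)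
    {ρ : Finset V} (hρ : ρ ∈ Δ) {u v : V} (hu : u ∈ ρ) (hv : v ∈ ρ) :
    ({u, v} : Finset V) ∈ Δ :=
  hC.2 ρ hρ _ (by simp [Finset.insert_subset_iff, hu, hv])

lemma singleton_mem_link {Δ : Finset (Finset V)} (hC : IsComplex Δ) (hF : IsFlag Δ)
    {σ τ : Finset V} (hσ : σ ∈ Δ) (hτσ : τ ⊆ σ) {w : V} :
    ({w} : Finset V) ∈ link Δ τ ↔
      w ∉ τ ∧ ({w} : Finset V) ∈ Δ ∧ ∀ u ∈ τ, ({w, u} : Finset V) ∈ Δ := by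
  simp only [link, Finset.mem_filter]
  constructor
  · rintro ⟨h1, h2, h3⟩
    refine ⟨?_, h1, ?_⟩
    · intro hw
      have := Finset.mem_inter.2 ⟨Finset.mem_singleton_self w, hw⟩
      rw [h2] at this; exact absurd this (Finset.notMem_empty w)
    · intro u hu
      exact hC.2 _ h3 _ (by simp [Finset.insert_subset_iff, hu])
  · rintro ⟨hwτ, hwΔ, hadj⟩
    have hun : {w} ∪ τ ∈ Δ := by
      apply hF
      intro u hu v hv
      simp only [Finset.mem_union, Finset.mem_singleton] at hu hv
      rcases hu with hu | hu <;> rcases hv with hv | hv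
      · subst hu; subst hv; simpa using hwΔ
      · subst hu; exact hadj v hv
      · subst hv; rw [Finset.pair_comm]; exact hadj u hu
      · exact pair_mem_of_subset hC hσ (hτσ hu) (hτσ hv)
    exact ⟨hwΔ, Finset.singleton_inter_of_notMem hwτ, hun⟩

lemma mem_verts_link {Δ : Finset (Finset V)} (hC : IsComplex Δ) {τ : Finset V} {w : V} :
    w ∈ verts (link Δ τ) ↔ ({w} : Finset V) ∈ link Δ τ := by
  constructor
  · intro h
    obtain ⟨ρ, hρ, hw⟩ := mem_verts.1 h
    simp only [link, Finset.mem_filter] at hρ ⊢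
    obtain ⟨h1, h2, h3⟩ := hρ
    have hwτ : w ∉ τ := by
      intro hwτ
      have := Finset.mem_inter.2 ⟨hw, hwτ⟩
      rw [h2] at this; exact absurd this (Finset.notMem_empty w)
    exact ⟨hC.2 _ h1 _ (Finset.singleton_subset_iff.2 hw),
      Finset.singleton_inter_of_notMem hwτ,
      hC.2 _ h3 _ (Finset.union_subset_union_left (Finset.singleton_subset_iff.2 hw))⟩
  · intro h
    exact mem_verts.2 ⟨{w}, h, by simp⟩

lemma fNum_link_zero {Δ : Finset (Finset V)} (hC : IsComplex Δ) (τ : Finset V) :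
    fNum (link Δ τ) 0 = ((verts Δ).filter fun w => ({w} : Finset V) ∈ link Δ τ).card := by
  unfold fNum
  rw [show (((verts Δ).filter fun w => ({w} : Finset V) ∈ link Δ τ)).card
      = ((((verts Δ).filter fun w => ({w} : Finset V) ∈ link Δ τ)).image
          fun w => ({w} : Finset V)).card from
      (Finset.card_image_of_injective _ fun a b h => by simpa using h).symm]
  congr 1
  ext ρ
  simp only [Finset.mem_filter, Finset.mem_image]
  constructor
  · rintro ⟨hρ, hcard⟩
    obtain ⟨w, rfl⟩ := Finset.card_eq_one.1 (by omega : ρ.card = 1)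
    have hwΔ : ({w} : Finset V) ∈ Δ := by
      simp only [link, Finset.mem_filter] at hρ; exact hρ.1
    exact ⟨w, ⟨(singleton_mem_iff hC).1 hwΔ, hρ⟩, rfl⟩
  · rintro ⟨w, ⟨_, h⟩, rfl⟩
    exact ⟨h, by simp⟩

lemma sum_card_filter_comm {α β : Type*} (s : Finset α) (t : Finset β)
    (p : α → β → Prop) [∀ a b, Decidable (p a b)] :
    ∑ a ∈ s, (t.filter fun b => p a b).card
      = ∑ b ∈ t, (s.filter fun a => p a b).card := by
  simp_rw [Finset.card_filter]
  exact Finset.sum_comm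

lemma NN_nonempty {Δ : Finset (Finset V)} (hC : IsComplex Δ) (hF : IsFlag Δ)
    {σ : Finset V} (hσ : IsFacet Δ σ) {w : V} (hw : ({w} : Finset V) ∈ Δ) (hwσ : w ∉ σ) :
    (NN Δ σ w).Nonempty := by
  rw [Finset.nonempty_iff_ne_empty]
  intro hempty
  have hins : insert w σ ∈ Δ := by
    apply hF
    intro u hu v hv
    simp only [Finset.mem_insert] at hu hv
    rcases hu with rfl | hu <;> rcases hv with rfl | hv
    · simpa using hw
    · by_contra h
      have : v ∈ NN Δ σ u := mem_NN.2 ⟨hv, h⟩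
      rw [hempty] at this; exact absurd this (Finset.notMem_empty v)
    · rw [Finset.pair_comm]
      by_contra h
      have : u ∈ NN Δ σ v := mem_NN.2 ⟨hu, h⟩
      rw [hempty] at this; exact absurd this (Finset.notMem_empty u)
    · exact pair_mem_of_subset hC hσ.1 hu hv
  have heq := hσ.2 _ hins (Finset.subset_insert _ _)
  exact hwσ (heq ▸ Finset.mem_insert_self w σ)

lemma aNum_eq {Δ : Finset (Finset V)} (hC : IsComplex Δ) (hF : IsFlag Δ)
    {σ : Finset V} (hσ : IsFacet Δ σ) {n : ℕ} (hcard : σ.card = n) (k : ℕ) :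
    aNum Δ σ k = n * (n - 1).choose k
      + ∑ w ∈ verts Δ \ σ, (n - (NN Δ σ w).card).choose k := by
  classical
  have hσU : σ ⊆ verts Δ := fun v hv => mem_verts.2 ⟨σ, hσ.1, hv⟩
  unfold aNum
  calc ∑ τ ∈ σ.powersetCard k, fNum (link Δ τ) 0
      = ∑ τ ∈ σ.powersetCard k,
          ((verts Δ).filter fun w => ({w} : Finset V) ∈ link Δ τ).card :=
        Finset.sum_congr rfl fun τ _ => fNum_link_zero hC τ
    _ = ∑ w ∈ verts Δ,
          ((σ.powersetCard k).filter fun τ => ({w} : Finset V) ∈ link Δ τ).card :=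
        sum_card_filter_comm _ _ _
    _ = _ := ?_
  rw [← Finset.sum_sdiff hσU, add_comm]
  congr 1
  · calc ∑ w ∈ σ, ((σ.powersetCard k).filter fun τ => ({w} : Finset V) ∈ link Δ τ).card
        = ∑ _w ∈ σ, (n - 1).choose k := ?_
      _ = n * (n - 1).choose k := by rw [Finset.sum_const, smul_eq_mul, hcard]
    apply Finset.sum_congr rfl
    intro w hw
    have hset : ((σ.powersetCard k).filter fun τ => ({w} : Finset V) ∈ link Δ τ)
        = (σ.erase w).powersetCard k := by
      ext τ
      simp only [Finset.mem_filter, Finset.mem_powersetCard, Finset.subset_erase]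
      constructor
      · rintro ⟨⟨hτσ, hcardτ⟩, hlink⟩
        exact ⟨⟨hτσ, ((singleton_mem_link hC hF hσ.1 hτσ).1 hlink).1⟩, hcardτ⟩
      · rintro ⟨⟨hτσ, hwτ⟩, hcardτ⟩
        refine ⟨⟨hτσ, hcardτ⟩, (singleton_mem_link hC hF hσ.1 hτσ).2 ⟨hwτ, ?_, ?_⟩⟩
        · exact hC.2 σ hσ.1 {w} (Finset.singleton_subset_iff.2 hw)
        · exact fun u hu => pair_mem_of_subset hC hσ.1 hw (hτσ hu)
    rw [hset, Finset.card_powersetCard, Finset.card_erase_of_mem hw, hcard]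
  · apply Finset.sum_congr rfl
    intro w hw
    obtain ⟨hwU, hwσ⟩ := Finset.mem_sdiff.1 hw
    have hset : ((σ.powersetCard k).filter fun τ => ({w} : Finset V) ∈ link Δ τ)
        = (σ \ NN Δ σ w).powersetCard k := by
      ext τ
      simp only [Finset.mem_filter, Finset.mem_powersetCard]
      constructor
      · rintro ⟨⟨hτσ, hcardτ⟩, hlink⟩
        obtain ⟨hwτ, hwΔ, hadj⟩ := (singleton_mem_link hC hF hσ.1 hτσ).1 hlink
        exact ⟨fun u hu => Finset.mem_sdiff.2
          ⟨hτσ hu, fun hmem => (mem_NN.1 hmem).2 (hadj u hu)⟩, hcardτ⟩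
      · rintro ⟨hτ, hcardτ⟩
        have hτσ : τ ⊆ σ := hτ.trans Finset.sdiff_subset
        refine ⟨⟨hτσ, hcardτ⟩, (singleton_mem_link hC hF hσ.1 hτσ).2
          ⟨fun hwτ => hwσ (hτσ hwτ), (singleton_mem_iff hC).2 hwU, fun u hu => ?_⟩⟩
        have h := Finset.mem_sdiff.1 (hτ hu)
        by_contra hnot
        exact h.2 (mem_NN.2 ⟨h.1, hnot⟩)
    rw [hset, Finset.card_powersetCard, Finset.card_sdiff_of_subset NN_subset, hcard]

lemma Wset_eq {Δ : Finset (Finset V)} (hC : IsComplex Δ) (σ τ : Finset V) :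
    Wset Δ σ τ = (verts Δ).filter fun w =>
      ({w} : Finset V) ∈ link Δ τ ∧ ∀ u ∈ σ \ τ, ({w, u} : Finset V) ∉ Δ := by
  ext w
  simp only [Wset, Finset.mem_filter]
  constructor
  · rintro ⟨h1, h2⟩
    have hl := (mem_verts_link hC).1 h1
    have hlΔ : ({w} : Finset V) ∈ Δ := by
      simp only [link, Finset.mem_filter] at hl; exact hl.1
    exact ⟨(singleton_mem_iff hC).1 hlΔ, hl, h2⟩
  · rintro ⟨_, h1, h2⟩
    exact ⟨(mem_verts_link hC).2 h1, h2⟩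

lemma tau_char {Δ : Finset (Finset V)} (hC : IsComplex Δ) (hF : IsFlag Δ)
    {σ : Finset V} (hσ : IsFacet Δ σ) {τ : Finset V} (hτσ : τ ⊆ σ)
    {w : V} (hlink : ({w} : Finset V) ∈ link Δ τ)
    (hnon : ∀ u ∈ σ \ τ, ({w, u} : Finset V) ∉ Δ) :
    w ∉ σ ∧ τ = σ \ NN Δ σ w := by
  obtain ⟨hwτ, hwΔ, hadj⟩ := (singleton_mem_link hC hF hσ.1 hτσ).1 hlink
  have hwσ : w ∉ σ := by
    intro hwσ
    exact hnon w (Finset.mem_sdiff.2 ⟨hwσ, hwτ⟩) (by simpa using hwΔ)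
  refine ⟨hwσ, Finset.Subset.antisymm ?_ ?_⟩
  · intro u hu
    exact Finset.mem_sdiff.2 ⟨hτσ hu, fun hm => (mem_NN.1 hm).2 (hadj u hu)⟩
  · intro u hu
    obtain ⟨huσ, hun⟩ := Finset.mem_sdiff.1 hu
    by_contra huτ
    exact hun (mem_NN.2 ⟨huσ, hnon u (Finset.mem_sdiff.2 ⟨huσ, huτ⟩)⟩)

lemma tau_mem {Δ : Finset (Finset V)} (hC : IsComplex Δ) (hF : IsFlag Δ)
    {σ : Finset V} (hσ : IsFacet Δ σ) {w : V} (hw : w ∈ verts Δ) (hwσ : w ∉ σ) :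
    ({w} : Finset V) ∈ link Δ (σ \ NN Δ σ w) ∧
      ∀ u ∈ σ \ (σ \ NN Δ σ w), ({w, u} : Finset V) ∉ Δ := by
  have h1 : σ \ NN Δ σ w ⊆ σ := Finset.sdiff_subset
  have hsd : σ \ (σ \ NN Δ σ w) = NN Δ σ w := Finset.sdiff_sdiff_eq_self NN_subset
  refine ⟨(singleton_mem_link hC hF hσ.1 h1).2
      ⟨fun hmem => hwσ (h1 hmem), (singleton_mem_iff hC).2 hw, fun u hu => ?_⟩, ?_⟩
  · have h := Finset.mem_sdiff.1 hu
    by_contra hnot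
    exact h.2 (mem_NN.2 ⟨h.1, hnot⟩)
  · rw [hsd]; exact fun u hu => (mem_NN.1 hu).2

lemma filter_tau_eq {Δ : Finset (Finset V)} (hC : IsComplex Δ) (hF : IsFlag Δ)
    {σ : Finset V} (hσ : IsFacet Δ σ) {n i : ℕ} (hcard : σ.card = n) (hi : i < n)
    {w : V} (hw : w ∈ verts Δ) :
    ((σ.powersetCard i).filter fun τ =>
        ({w} : Finset V) ∈ link Δ τ ∧ ∀ u ∈ σ \ τ, ({w, u} : Finset V) ∉ Δ)
      = if w ∉ σ ∧ (NN Δ σ w).card = n - i then {σ \ NN Δ σ w} else ∅ := by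
  have hNNle : (NN Δ σ w).card ≤ n := hcard ▸ Finset.card_le_card NN_subset
  split_ifs with hcond
  · obtain ⟨hwσ, hNN⟩ := hcond
    ext τ
    simp only [Finset.mem_filter, Finset.mem_powersetCard, Finset.mem_singleton]
    constructor
    · rintro ⟨⟨hτσ, hτcard⟩, hlink, hnon⟩
      exact (tau_char hC hF hσ hτσ hlink hnon).2
    · rintro rfl
      have h2 : (σ \ NN Δ σ w).card = i := by
        rw [Finset.card_sdiff_of_subset NN_subset, hcard, hNN]; omega
      obtain ⟨hl, hn⟩ := tau_mem hC hF hσ hw hwσ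
      exact ⟨⟨Finset.sdiff_subset, h2⟩, hl, hn⟩
  · rw [Finset.filter_eq_empty_iff]
    rintro τ hτ ⟨hlink, hnon⟩
    obtain ⟨hτσ, hτcard⟩ := Finset.mem_powersetCard.1 hτ
    obtain ⟨hwσ, hτeq⟩ := tau_char hC hF hσ hτσ hlink hnon
    apply hcond
    refine ⟨hwσ, ?_⟩
    have : (σ \ NN Δ σ w).card = i := by rw [← hτeq]; exact hτcard
    rw [Finset.card_sdiff_of_subset NN_subset, hcard] at this
    omega

lemma bNum_eq {Δ : Finset (Finset V)} (hC : IsComplex Δ) (hF : IsFlag Δ)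
    {σ : Finset V} (hσ : IsFacet Δ σ) {n : ℕ} (hcard : σ.card = n) {i : ℕ} (hi : i < n) :
    bNum Δ σ i = ((verts Δ \ σ).filter fun w => (NN Δ σ w).card = n - i).card := by
  classical
  unfold bNum
  calc ∑ τ ∈ σ.powersetCard i, (Wset Δ σ τ).card
      = ∑ τ ∈ σ.powersetCard i, ((verts Δ).filter fun w =>
          ({w} : Finset V) ∈ link Δ τ ∧ ∀ u ∈ σ \ τ, ({w, u} : Finset V) ∉ Δ).card :=
        Finset.sum_congr rfl fun τ _ => by rw [Wset_eq hC]
    _ = ∑ w ∈ verts Δ, ((σ.powersetCard i).filter fun τ =>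
          ({w} : Finset V) ∈ link Δ τ ∧ ∀ u ∈ σ \ τ, ({w, u} : Finset V) ∉ Δ).card :=
        sum_card_filter_comm _ _ _
    _ = ∑ w ∈ verts Δ,
          (if w ∉ σ ∧ (NN Δ σ w).card = n - i then 1 else 0) := by
        apply Finset.sum_congr rfl
        intro w hw
        rw [filter_tau_eq hC hF hσ hcard hi hw]
        split_ifs <;> simp
    _ = ((verts Δ).filter fun w => w ∉ σ ∧ (NN Δ σ w).card = n - i).card :=
        (Finset.card_filter _ _).symm
    _ = _ := by rw [Finset.sdiff_eq_filter, Finset.filter_filter]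

lemma sum_choose_eq {Δ : Finset (Finset V)} (hC : IsComplex Δ) (hF : IsFlag Δ)
    {σ : Finset V} (hσ : IsFacet Δ σ) {n : ℕ} (hcard : σ.card = n) (hn : 0 < n) (k : ℕ) :
    ∑ w ∈ verts Δ \ σ, (n - (NN Δ σ w).card).choose k
      = ∑ i ∈ Finset.range n, i.choose k * bNum Δ σ i := by
  classical
  have hb : ∀ w ∈ verts Δ \ σ, 0 < (NN Δ σ w).card ∧ (NN Δ σ w).card ≤ n := by
    intro w hw
    obtain ⟨hwU, hwσ⟩ := Finset.mem_sdiff.1 hw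
    exact ⟨Finset.card_pos.2 (NN_nonempty hC hF hσ ((singleton_mem_iff hC).2 hwU) hwσ),
      hcard ▸ Finset.card_le_card NN_subset⟩
  have hmaps : ∀ w ∈ verts Δ \ σ, n - (NN Δ σ w).card ∈ Finset.range n := by
    intro w hw
    obtain ⟨h1, h2⟩ := hb w hw
    simp only [Finset.mem_range]; omega
  rw [← Finset.sum_fiberwise_of_maps_to hmaps fun w => (n - (NN Δ σ w).card).choose k]
  apply Finset.sum_congr rfl
  intro i hi
  have hin : i < n := Finset.mem_range.1 hi
  have hfil : (verts Δ \ σ).filter (fun w => n - (NN Δ σ w).card = i)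
      = (verts Δ \ σ).filter fun w => (NN Δ σ w).card = n - i := by
    apply Finset.filter_congr
    intro w hw
    obtain ⟨h1, h2⟩ := hb w hw
    constructor <;> (intro h; omega)
  calc ∑ w ∈ (verts Δ \ σ).filter (fun w => n - (NN Δ σ w).card = i),
        (n - (NN Δ σ w).card).choose k
      = ∑ w ∈ (verts Δ \ σ).filter (fun w => n - (NN Δ σ w).card = i), i.choose k :=
        Finset.sum_congr rfl fun w hw => by rw [(Finset.mem_filter.1 hw).2]
    _ = _ := by
        rw [Finset.sum_const, smul_eq_mul, mul_comm, hfil,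
          bNum_eq hC hF hσ hcard hin]

lemma bNum_top {Δ : Finset (Finset V)} (hF : IsFlag Δ)
    {m : ℕ} (hm : 2 ≤ m) (hP : IsPseudomanifold Δ (2 * m)) {σ : Finset V}
    (hσ : IsFacet Δ σ) (hcard : σ.card = 2 * m) :
    bNum Δ σ (2 * m - 1) = 2 * m := by
  classical
  unfold bNum
  have hC := hP.1
  have hone : ∀ τ ∈ σ.powersetCard (2 * m - 1), (Wset Δ σ τ).card = 1 := by
    intro τ hτ
    obtain ⟨hτσ, hτcard⟩ := Finset.mem_powersetCard.1 hτ
    have hτΔ : τ ∈ Δ := hC.2 σ hσ.1 τ hτσ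
    have hPM := hP.2.2 τ hτΔ hτcard
    have hσF : σ ∈ Δ.filter fun ρ => ρ.card = 2 * m ∧ τ ⊆ ρ :=
      Finset.mem_filter.2 ⟨hσ.1, hcard, hτσ⟩
    have hpos : 0 < ((Δ.filter fun ρ => ρ.card = 2 * m ∧ τ ⊆ ρ).erase σ).card := by
      rw [Finset.card_erase_of_mem hσF, hPM]
      omega
    obtain ⟨ρ, hρ⟩ := Finset.card_pos.1 hpos
    have hρσ : ρ ≠ σ := (Finset.mem_erase.1 hρ).1
    have hρF : ρ ∈ Δ.filter fun ρ => ρ.card = 2 * m ∧ τ ⊆ ρ := (Finset.mem_erase.1 hρ).2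
    obtain ⟨hρΔ, hρcard, hτρ⟩ := Finset.mem_filter.1 hρF
    have hsd : (ρ \ τ).card = 1 := by
      rw [Finset.card_sdiff_of_subset hτρ, hρcard, hτcard]; omega
    obtain ⟨w₀, hw₀⟩ := Finset.card_eq_one.1 hsd
    have hw₀ρ : w₀ ∈ ρ := (Finset.mem_sdiff.1 (hw₀ ▸ Finset.mem_singleton_self w₀)).1
    have hw₀τ : w₀ ∉ τ := (Finset.mem_sdiff.1 (hw₀ ▸ Finset.mem_singleton_self w₀)).2
    have hρeq : ρ = insert w₀ τ := by
      refine (Finset.eq_of_subset_of_card_le ?_ ?_).symm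
      · intro x hx
        rcases Finset.mem_insert.1 hx with rfl | hx
        exacts [hw₀ρ, hτρ hx]
      · rw [hρcard, Finset.card_insert_of_notMem hw₀τ, hτcard]; omega
    rw [Finset.card_eq_one]
    refine ⟨w₀, ?_⟩
    ext w
    rw [Finset.mem_singleton, Wset_eq hC]
    simp only [Finset.mem_filter]
    constructor
    · rintro ⟨hwU, hwlink, hwnon⟩
      simp only [link, Finset.mem_filter] at hwlink
      obtain ⟨hwΔ, hwint, hwun⟩ := hwlink
      have hwτ : w ∉ τ := by
        intro h
        have := Finset.mem_inter.2 ⟨Finset.mem_singleton_self w, h⟩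
        rw [hwint] at this; exact absurd this (Finset.notMem_empty w)
      have hmem : ({w} ∪ τ : Finset V) ∈ Δ.filter fun ρ' => ρ'.card = 2 * m ∧ τ ⊆ ρ' := by
        refine Finset.mem_filter.2 ⟨hwun, ?_, Finset.subset_union_right⟩
        rw [Finset.card_union_of_disjoint (by simpa [Finset.disjoint_singleton_left] using hwτ),
          Finset.card_singleton, hτcard]
        omega
      have hFeq : (Δ.filter fun ρ' => ρ'.card = 2 * m ∧ τ ⊆ ρ') = {σ, ρ} := by
        refine (Finset.eq_of_subset_of_card_le ?_ ?_).symm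
        · intro x hx
          rcases Finset.mem_insert.1 hx with rfl | hx
          · exact hσF
          · rw [Finset.mem_singleton.1 hx]; exact hρF
        · rw [hPM, Finset.card_pair (Ne.symm hρσ)]
      have hcases : ({w} ∪ τ : Finset V) = σ ∨ ({w} ∪ τ : Finset V) = ρ := by
        have := hFeq ▸ hmem
        simpa using this
      rcases hcases with h | h
      · exfalso
        have hwσ' : w ∈ σ := h ▸ Finset.mem_union_left _ (Finset.mem_singleton_self w)
        have hwΔ' : ({w} : Finset V) ∈ Δ :=
          hC.2 _ hwun {w} Finset.subset_union_left
        exact hwnon w (Finset.mem_sdiff.2 ⟨hwσ', hwτ⟩) (by simpa using hwΔ')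
      · have : w ∈ ρ \ τ := Finset.mem_sdiff.2
          ⟨h ▸ Finset.mem_union_left _ (Finset.mem_singleton_self w), hwτ⟩
        rw [hw₀] at this
        simpa using this
    · intro hww
      rw [hww]
      have hw₀Δ : ({w₀} : Finset V) ∈ Δ :=
        hC.2 ρ hρΔ _ (Finset.singleton_subset_iff.2 hw₀ρ)
      have hunρ : ({w₀} ∪ τ : Finset V) = ρ := by
        rw [hρeq]; ext x; simp [or_comm]
      refine ⟨(singleton_mem_iff hC).1 hw₀Δ, ?_, ?_⟩
      · simp only [link, Finset.mem_filter]
        exact ⟨hw₀Δ, Finset.singleton_inter_of_notMem hw₀τ, hunρ ▸ hρΔ⟩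
      · intro u hu hpair
        obtain ⟨huσ, huτ⟩ := Finset.mem_sdiff.1 hu
        have hw₀σ : w₀ ∉ σ := by
          intro h
          apply hρσ
          rw [hρeq]
          apply Finset.eq_of_subset_of_card_le
          · intro x hx
            rcases Finset.mem_insert.1 hx with rfl | hx
            exacts [h, hτσ hx]
          · rw [hcard, Finset.card_insert_of_notMem hw₀τ, hτcard]; omega
        -- σ \ τ = {u}
        have h1 : (σ \ τ).card = 1 := by
          rw [Finset.card_sdiff_of_subset hτσ, hcard, hτcard]; omega
        obtain ⟨y, hy⟩ := Finset.card_eq_one.1 h1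
        have hu' : u = y := by rw [hy] at hu; simpa using hu
        have hins : insert w₀ σ ∈ Δ := by
          apply hF
          intro a ha c hc
          simp only [Finset.mem_insert] at ha hc
          rcases ha with rfl | ha <;> rcases hc with rfl | hc
          · simpa using hw₀Δ
          · by_cases hcτ : c ∈ τ
            · exact pair_mem_of_subset hC hρΔ hw₀ρ (hτρ hcτ)
            · have : c = u := by
                have : c ∈ σ \ τ := Finset.mem_sdiff.2 ⟨hc, hcτ⟩
                rw [hy] at this
                simp only [Finset.mem_singleton] at this
                rw [this, ← hu']
              rw [this]; exact hpair
          · rw [Finset.pair_comm]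
            by_cases haτ : a ∈ τ
            · exact pair_mem_of_subset hC hρΔ hw₀ρ (hτρ haτ)
            · have : a = u := by
                have : a ∈ σ \ τ := Finset.mem_sdiff.2 ⟨ha, haτ⟩
                rw [hy] at this
                simp only [Finset.mem_singleton] at this
                rw [this, ← hu']
              rw [this]; exact hpair
          · exact pair_mem_of_subset hC hσ.1 ha hc
        have heq := hσ.2 _ hins (Finset.subset_insert _ _)
        exact hw₀σ (heq ▸ Finset.mem_insert_self w₀ σ)
  calc ∑ τ ∈ σ.powersetCard (2 * m - 1), (Wset Δ σ τ).card
      = ∑ _τ ∈ σ.powersetCard (2 * m - 1), 1 := Finset.sum_congr rfl hone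
    _ = (σ.powersetCard (2 * m - 1)).card := by rw [Finset.sum_const, smul_eq_mul, mul_one]
    _ = (2 * m).choose (2 * m - 1) := by rw [Finset.card_powersetCard, hcard]
    _ = 2 * m := by
        have h1 : 2 * m - 1 = 2 * m - 1 := rfl
        have h2 : (2 * m).choose (2 * m - 1) = (2 * m).choose 1 := by
          have := Nat.choose_symm (n := 2 * m) (k := 1) (by omega)
          simpa using this
        rw [h2, Nat.choose_one_right]

end AkAux

open AkAux in

/-- Let `m ≥ 2`, let `Δ` be a flag `(2m-1)`-dimensional
pseudomanifold and `σ` a facet.  For every `1 < k ≤ 2m - 2`: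
`a_k = C(2m-2,k)·a_{2m-2} - 4m(2m-2-k)·C(2m-1,k) + Σ_{i=k}^{2m-3} C(i,k)·b_i`. -/
theorem a_k_formula (m : ℕ) (hm : 2 ≤ m) (Δ : Finset (Finset V))
    (hF : IsFlag Δ) (hP : IsPseudomanifold Δ (2 * m)) (σ : Finset V)
    (hσ : IsFacet Δ σ) (k : ℕ) (hk1 : 1 < k) (hk2 : k ≤ 2 * m - 2) :
    (aNum Δ σ k : ℤ) =
      ((2 * m - 2).choose k) * aNum Δ σ (2 * m - 2)
        - 4 * m * (2 * m - 2 - k) * ((2 * m - 1).choose k)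
        + ∑ i ∈ Finset.Icc k (2 * m - 3), (i.choose k : ℤ) * bNum Δ σ i := by
  classical
  have hC : IsComplex Δ := hP.1
  have hcard : σ.card = 2 * m := hP.2.1 σ hσ
  have star : ∀ j, aNum Δ σ j = 2 * m * (2 * m - 1).choose j
      + ∑ i ∈ Finset.range (2 * m), i.choose j * bNum Δ σ i := by
    intro j
    rw [aNum_eq hC hF hσ hcard j,
      sum_choose_eq hC hF hσ hcard (by omega) j]
  have htop : bNum Δ σ (2 * m - 1) = 2 * m := bNum_top hF hm hP hσ hcard
  have hsplit : ∀ j, ∑ i ∈ Finset.range (2 * m), i.choose j * bNum Δ σ i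
      = (∑ i ∈ Finset.range (2 * m - 2), i.choose j * bNum Δ σ i)
        + (2 * m - 2).choose j * bNum Δ σ (2 * m - 2)
        + (2 * m - 1).choose j * bNum Δ σ (2 * m - 1) := by
    intro j
    have e1 : Finset.range (2 * m) = Finset.range ((2 * m - 1) + 1) := by congr 1; omega
    have e2 : Finset.range (2 * m - 1) = Finset.range ((2 * m - 2) + 1) := by congr 1; omega
    have e3 : 2 * m - 2 + 1 = 2 * m - 1 := by omega
    rw [e1, Finset.sum_range_succ, e2, Finset.sum_range_succ]
  have hdrop : ∑ i ∈ Finset.range (2 * m - 2), i.choose k * bNum Δ σ i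
      = ∑ i ∈ Finset.Icc k (2 * m - 3), i.choose k * bNum Δ σ i := by
    symm
    apply Finset.sum_subset
    · intro i hi
      simp only [Finset.mem_Icc] at hi
      simp only [Finset.mem_range]
      omega
    · intro i hi hni
      simp only [Finset.mem_range] at hi
      simp only [Finset.mem_Icc, not_and, not_le] at hni
      have hik : i < k := by
        by_contra h
        have := hni (by omega)
        omega
      rw [Nat.choose_eq_zero_of_lt hik, zero_mul]
  have hzero : ∑ i ∈ Finset.range (2 * m - 2), i.choose (2 * m - 2) * bNum Δ σ i = 0 := by
    apply Finset.sum_eq_zero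
    intro i hi
    rw [Nat.choose_eq_zero_of_lt (Finset.mem_range.1 hi), zero_mul]
  have hchoose : (2 * m - 1).choose (2 * m - 2) = 2 * m - 1 := by
    have h1 : 2 * m - 1 - 1 = 2 * m - 2 := by omega
    rw [← h1, Nat.choose_symm (by omega), Nat.choose_one_right]
  have hA : aNum Δ σ k
      = 2 * m * (2 * m - 1).choose k
        + ((∑ i ∈ Finset.Icc k (2 * m - 3), i.choose k * bNum Δ σ i)
          + (2 * m - 2).choose k * bNum Δ σ (2 * m - 2)
          + (2 * m - 1).choose k * (2 * m)) := by
    rw [star k, hsplit k, hdrop, htop]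
  have hA' : aNum Δ σ (2 * m - 2)
      = 2 * m * (2 * m - 1) + (bNum Δ σ (2 * m - 2) + (2 * m - 1) * (2 * m)) := by
    rw [star (2 * m - 2), hsplit (2 * m - 2), hzero, htop, Nat.choose_self, hchoose,
      one_mul, zero_add]
  have key : (2 * m - 2).choose k * (2 * m - 1) = (2 * m - 1).choose k * (2 * m - 1 - k) := by
    have h := Nat.choose_mul_succ_eq (2 * m - 2) k
    have h1 : 2 * m - 2 + 1 = 2 * m - 1 := by omega
    rw [h1] at h
    exact h
  have hS : ∑ i ∈ Finset.Icc k (2 * m - 3), (i.choose k : ℤ) * (bNum Δ σ i : ℤ)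
      = ((∑ i ∈ Finset.Icc k (2 * m - 3), i.choose k * bNum Δ σ i : ℕ) : ℤ) := by
    push_cast
    rfl
  rw [hS, hA, hA']
  have key' : ((2 * m - 2).choose k : ℤ) * ((2 * m - 1 : ℕ) : ℤ)
      = ((2 * m - 1).choose k : ℤ) * (2 * (m : ℤ) - 1 - (k : ℤ)) := by
    have e : ((2 * m - 1 - k : ℕ) : ℤ) = 2 * (m : ℤ) - 1 - (k : ℤ) := by omega
    rw [← e]
    exact_mod_cast key
  have e1 : ((2 * m - 1 : ℕ) : ℤ) = 2 * (m : ℤ) - 1 := by omega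
  push_cast
  rw [e1] at key' ⊢
  linear_combination (-4 * (m : ℤ)) * key'
end

section
/- Let m ≥ 2, let Δ be a flag (2m−1)-dimensional pseudomanifold with n vertices, and let σ be a facet of Δ such that Σ_{v∈σ} f₀(lk({v},Δ)) = 2(m−1)n + 4m. Then (i) for every face τ ⊆ σ with |σ∖τ| ≥ 3, the union ∪_{v∈σ∖τ} V(lk(τ∪{v},Δ)) equals V(lk(τ,Δ)); and (ii) the union ∪_{δ⊆σ, |δ|=2m−2} V(lk(δ,Δ)) over all subsets δ of σ of cardinality 2m−2 equals V(Δ). -/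
open Finset

variable {V : Type*} [DecidableEq V]

section AuxLemmas

lemma aux_mem_verts {Δ : Finset (Finset V)} {w : V} :
    w ∈ verts Δ ↔ ∃ ρ ∈ Δ, w ∈ ρ := by
  simp [verts, Finset.mem_sup]

lemma aux_singleton_mem_link_iff {Δ : Finset (Finset V)} (hC : IsComplex Δ)
    {τ : Finset V} {w : V} :
    ({w} : Finset V) ∈ link Δ τ ↔ w ∉ τ ∧ insert w τ ∈ Δ := by
  simp only [link, Finset.mem_filter]
  constructor
  · rintro ⟨hΔ, hint, hun⟩
    have hw : w ∉ τ := by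
      intro hw
      have : w ∈ ({w} : Finset V) ∩ τ :=
        Finset.mem_inter.2 ⟨Finset.mem_singleton_self w, hw⟩
      simp [hint] at this
    exact ⟨hw, by rw [Finset.insert_eq]; exact hun⟩
  · rintro ⟨hw, hins⟩
    refine ⟨hC.2 _ hins {w} (by simp), Finset.singleton_inter_of_notMem hw, ?_⟩
    rw [← Finset.insert_eq]; exact hins

lemma aux_mem_verts_link_iff {Δ : Finset (Finset V)} (hC : IsComplex Δ)
    {τ : Finset V} {w : V} :
    w ∈ verts (link Δ τ) ↔ w ∉ τ ∧ insert w τ ∈ Δ := by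
  constructor
  · intro h
    obtain ⟨ρ, hρ, hw⟩ := aux_mem_verts.1 h
    simp only [link, Finset.mem_filter] at hρ
    obtain ⟨hρΔ, hint, hun⟩ := hρ
    have hwτ : w ∉ τ := by
      intro hwτ
      have : w ∈ ρ ∩ τ := Finset.mem_inter.2 ⟨hw, hwτ⟩
      simp [hint] at this
    refine ⟨hwτ, hC.2 _ hun _ ?_⟩
    intro x hx
    rcases Finset.mem_insert.1 hx with rfl | hx
    · exact Finset.mem_union_left _ hw
    · exact Finset.mem_union_right _ hx
  · rintro ⟨hw, hins⟩
    exact aux_mem_verts.2 ⟨{w}, (aux_singleton_mem_link_iff hC).2 ⟨hw, hins⟩, by simp⟩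

lemma aux_fNum_link_zero {Δ : Finset (Finset V)} (hC : IsComplex Δ) (τ : Finset V) :
    fNum (link Δ τ) 0 = ((verts Δ).filter fun w => w ∉ τ ∧ insert w τ ∈ Δ).card := by
  rw [fNum]
  refine (Finset.card_bij (fun w _ => ({w} : Finset V)) ?_ ?_ ?_).symm
  · intro w hw
    simp only [Finset.mem_filter] at hw ⊢
    exact ⟨(aux_singleton_mem_link_iff hC).2 hw.2, by simp⟩
  · intro a _ b _ h
    simpa using h
  · intro ρ hρ
    simp only [Finset.mem_filter] at hρ
    obtain ⟨hρl, hcard⟩ := hρ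
    obtain ⟨w, rfl⟩ := Finset.card_eq_one.1 hcard
    have h := (aux_singleton_mem_link_iff hC).1 hρl
    refine ⟨w, ?_, rfl⟩
    simp only [Finset.mem_filter]
    exact ⟨aux_mem_verts.2 ⟨insert w τ, h.2, Finset.mem_insert_self _ _⟩, h⟩

lemma aux_sum_card_filter_comm {α β : Type*} (s : Finset α) (t : Finset β)
    (p : α → β → Prop) [∀ a b, Decidable (p a b)] :
    ∑ a ∈ s, (t.filter fun b => p a b).card
      = ∑ b ∈ t, (s.filter fun a => p a b).card := by
  simp only [Finset.card_filter]
  exact Finset.sum_comm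

end AuxLemmas

/-- Let `m ≥ 2`, let `Δ` be a flag `(2m-1)`-dimensional
pseudomanifold with `n` vertices and `σ` a facet with
`Σ_{v ∈ σ} f₀(lk({v},Δ)) = 2(m-1)n + 4m`.  Then
(i) for every face `τ ⊆ σ` with `|σ \ τ| ≥ 3`,
`∪_{v ∈ σ\τ} V(lk(τ ∪ {v},Δ)) = V(lk(τ,Δ))`; and
(ii) `∪_{δ ⊆ σ, |δ| = 2m-2} V(lk(δ,Δ)) = V(Δ)`. -/
theorem sum_of_vertex_links_eq (m : ℕ) (hm : 2 ≤ m) (Δ : Finset (Finset V))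
    (hF : IsFlag Δ) (hP : IsPseudomanifold Δ (2 * m)) (n : ℕ)
    (hn : (verts Δ).card = n) (σ : Finset V) (hσ : IsFacet Δ σ)
    (heq : ∑ v ∈ σ, fNum (link Δ {v}) 0 = 2 * (m - 1) * n + 4 * m) :
    (∀ τ ⊆ σ, 3 ≤ (σ \ τ).card →
        ((σ \ τ).biUnion fun v => verts (link Δ (insert v τ))) = verts (link Δ τ)) ∧
      ((σ.powersetCard (2 * m - 2)).biUnion fun δ => verts (link Δ δ)) = verts Δ := by
  obtain ⟨hC, hpure, htwo⟩ := hP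
  have hσΔ := hσ.1
  have hσcard : σ.card = 2 * m := hpure σ hσ
  have hpairσ : ∀ x ∈ σ, ∀ y ∈ σ, ({x, y} : Finset V) ∈ Δ := by
    intro x hx y hy
    exact hC.2 σ hσΔ _ (Finset.insert_subset hx (Finset.singleton_subset_iff.2 hy))
  have hσv : σ ⊆ verts Δ := fun v hv => aux_mem_verts.2 ⟨σ, hσΔ, hv⟩
  set D : V → Finset V :=
    (fun w => σ.filter (fun v => w ∉ ({v} : Finset V) ∧ insert w {v} ∈ Δ)) with hD
  have hDmem : ∀ w v, v ∈ D w ↔ v ∈ σ ∧ w ≠ v ∧ ({w, v} : Finset V) ∈ Δ := by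
    intro w v
    simp [hD, Finset.mem_filter, and_assoc]
  have hDsub : ∀ w, D w ⊆ σ := fun w => Finset.filter_subset _ _
  -- flagness helper
  have hflag2 : ∀ w ∈ verts Δ, ∀ s ⊆ σ,
      (∀ v ∈ s, ({w, v} : Finset V) ∈ Δ) → insert w s ∈ Δ := by
    intro w hw s hs hadj
    apply hF
    have key : ∀ z ∈ insert w s, ({w, z} : Finset V) ∈ Δ := by
      intro z hz
      rcases Finset.mem_insert.1 hz with hz | hz
      · rw [hz, Finset.pair_eq_singleton]
        obtain ⟨ρ, hρ, hwρ⟩ := aux_mem_verts.1 hw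
        exact hC.2 ρ hρ _ (Finset.singleton_subset_iff.2 hwρ)
      · exact hadj z hz
    intro x hx y hy
    rcases Finset.mem_insert.1 hx with hx' | hx'
    · rw [hx']
      exact key y hy
    · rcases Finset.mem_insert.1 hy with hy' | hy'
      · rw [hy', Finset.pair_comm]
        exact key x hx
      · exact hpairσ x (hs hx') y (hs hy')
  have hflag : ∀ w ∈ verts Δ, ∀ τ ⊆ D w, insert w τ ∈ Δ := by
    intro w hw τ hτ
    refine hflag2 w hw τ (hτ.trans (hDsub w)) ?_
    intro v hv
    exact ((hDmem w v).1 (hτ hv)).2.2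
  have hDσ : ∀ w ∈ σ, D w = σ.erase w := by
    intro w hw
    ext v
    rw [Finset.mem_erase, hDmem]
    constructor
    · rintro ⟨hv, hne, -⟩
      exact ⟨fun h => hne h.symm, hv⟩
    · rintro ⟨hne, hv⟩
      exact ⟨hv, fun h => hne h.symm, hpairσ w hw v hv⟩
  have hDlt : ∀ w ∈ verts Δ, w ∉ σ → (D w).card ≤ 2 * m - 1 := by
    intro w hw hwσ
    by_contra hlt
    push_neg at hlt
    have hDeq : D w = σ := Finset.eq_of_subset_of_card_le (hDsub w) (by omega)
    have hins : insert w σ ∈ Δ := hflag w hw σ (by rw [hDeq])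
    have heqσ := hσ.2 _ hins (Finset.subset_insert _ _)
    exact hwσ (heqσ ▸ Finset.mem_insert_self w σ)
  set P := σ.powersetCard (2 * m - 1) with hPdef
  have hmemP : ∀ τ, τ ∈ P ↔ τ ⊆ σ ∧ τ.card = 2 * m - 1 := by
    intro τ
    rw [hPdef, Finset.mem_powersetCard]
  have hLtwo : ∀ τ ∈ P, ((verts Δ).filter fun w => w ∉ τ ∧ insert w τ ∈ Δ).card = 2 := by
    intro τ hτ
    obtain ⟨hτσ, hτc⟩ := (hmemP τ).1 hτ
    have hτΔ : τ ∈ Δ := hC.2 σ hσΔ τ hτσ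
    rw [← htwo τ hτΔ hτc]
    apply Finset.card_bij (fun w _ => insert w τ)
    · intro w hw
      simp only [Finset.mem_filter] at hw ⊢
      refine ⟨hw.2.2, ?_, Finset.subset_insert _ _⟩
      rw [Finset.card_insert_of_notMem hw.2.1, hτc]
      omega
    · intro a ha b hb hab
      simp only [Finset.mem_filter] at ha hb
      have : a ∈ insert b τ := hab ▸ Finset.mem_insert_self a τ
      rcases Finset.mem_insert.1 this with h | h
      · exact h
      · exact absurd h ha.2.1
    · intro ρ hρ
      simp only [Finset.mem_filter] at hρ
      obtain ⟨hρΔ, hρc, hτρ⟩ := hρ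
      have hcard1 : (ρ \ τ).card = 1 := by
        rw [Finset.card_sdiff_of_subset hτρ]
        omega
      obtain ⟨w, hw⟩ := Finset.card_eq_one.1 hcard1
      have hwρ : w ∈ ρ ∧ w ∉ τ := by
        have : w ∈ ρ \ τ := hw ▸ Finset.mem_singleton_self w
        exact ⟨(Finset.mem_sdiff.1 this).1, (Finset.mem_sdiff.1 this).2⟩
      have hρeq : ρ = insert w τ := by
        apply Finset.Subset.antisymm
        · intro x hx
          by_cases hxτ : x ∈ τ
          · exact Finset.mem_insert_of_mem hxτ
          · have hxd : x ∈ ρ \ τ := Finset.mem_sdiff.2 ⟨hx, hxτ⟩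
            rw [hw] at hxd
            exact Finset.mem_insert.2 (Or.inl (Finset.mem_singleton.1 hxd))
        · exact Finset.insert_subset hwρ.1 hτρ
      refine ⟨w, ?_, hρeq.symm⟩
      simp only [Finset.mem_filter]
      exact ⟨aux_mem_verts.2 ⟨ρ, hρΔ, hwρ.1⟩, hwρ.2, hρeq ▸ hρΔ⟩
  set t : V → ℕ := (fun w => (P.filter fun τ => w ∉ τ ∧ insert w τ ∈ Δ).card) with ht
  have hswap1 : ∑ v ∈ σ, fNum (link Δ {v}) 0 = ∑ w ∈ verts Δ, (D w).card := by
    rw [Finset.sum_congr rfl (fun v _ => aux_fNum_link_zero hC {v}),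
      aux_sum_card_filter_comm σ (verts Δ) (fun v w => w ∉ ({v} : Finset V) ∧ insert w {v} ∈ Δ)]
  have hswap2 : ∑ τ ∈ P, ((verts Δ).filter fun w => w ∉ τ ∧ insert w τ ∈ Δ).card
      = ∑ w ∈ verts Δ, t w :=
    aux_sum_card_filter_comm P (verts Δ) (fun τ w => w ∉ τ ∧ insert w τ ∈ Δ)
  have hPcard : P.card = 2 * m := by
    rw [hPdef, Finset.card_powersetCard, hσcard,
      show 2 * m - 1 = 2 * m - 1 from rfl]
    have h1 : (2 * m) - 1 = (2 * m) - 1 := rfl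
    have := Nat.choose_symm (show 1 ≤ 2 * m by omega)
    rw [this, Nat.choose_one_right]
  have htop : ∑ w ∈ verts Δ, t w = 4 * m := by
    rw [← hswap2, Finset.sum_congr rfl hLtwo, Finset.sum_const, hPcard, smul_eq_mul]
    omega
  have htσ : ∀ w ∈ σ, t w = 1 := by
    intro w hw
    have hfe : P.filter (fun τ => w ∉ τ ∧ insert w τ ∈ Δ) = {σ.erase w} := by
      ext τ
      simp only [Finset.mem_filter, Finset.mem_singleton, hmemP]
      constructor
      · rintro ⟨⟨hτσ, hτc⟩, hwτ, -⟩
        have hsub : τ ⊆ σ.erase w := Finset.subset_erase.2 ⟨hτσ, hwτ⟩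
        exact Finset.eq_of_subset_of_card_le hsub
          (by rw [Finset.card_erase_of_mem hw, hσcard, hτc])
      · rintro rfl
        refine ⟨⟨Finset.erase_subset _ _, by rw [Finset.card_erase_of_mem hw, hσcard]⟩,
          Finset.notMem_erase _ _, ?_⟩
        rw [Finset.insert_erase hw]
        exact hσΔ
    simp only [ht]
    rw [hfe, Finset.card_singleton]
  have hτD : ∀ w, w ∉ σ → ∀ τ ∈ P.filter (fun τ => w ∉ τ ∧ insert w τ ∈ Δ), τ ⊆ D w := by
    intro w hwσ τ hτ
    simp only [Finset.mem_filter, hmemP] at hτ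
    obtain ⟨⟨hτσ, hτc⟩, hwτ, hins⟩ := hτ
    intro v hv
    rw [hDmem]
    refine ⟨hτσ hv, fun h => hwσ (h ▸ hτσ hv), ?_⟩
    exact hC.2 _ hins _ (Finset.insert_subset (Finset.mem_insert_self _ _)
      (Finset.singleton_subset_iff.2 (Finset.mem_insert_of_mem hv)))
  have htM : ∀ w ∈ verts Δ \ σ, t w = if (D w).card = 2 * m - 1 then 1 else 0 := by
    intro w hw
    obtain ⟨hwv, hwσ⟩ := Finset.mem_sdiff.1 hw
    by_cases hdc : (D w).card = 2 * m - 1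
    · rw [if_pos hdc]
      have hfe : P.filter (fun τ => w ∉ τ ∧ insert w τ ∈ Δ) = {D w} := by
        ext τ
        constructor
        · intro hτ
          have hsub := hτD w hwσ τ hτ
          have hτc := ((hmemP τ).1 (Finset.mem_filter.1 hτ).1).2
          rw [Finset.mem_singleton]
          exact Finset.eq_of_subset_of_card_le hsub (by omega)
        · intro hτ
          rw [Finset.mem_singleton] at hτ
          subst hτ
          refine Finset.mem_filter.2 ⟨(hmemP _).2 ⟨hDsub w, hdc⟩,
            fun h => hwσ (hDsub w h), hflag w hwv _ (Finset.Subset.refl _)⟩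
      simp only [ht]
      rw [hfe, Finset.card_singleton]
    · rw [if_neg hdc]
      have hfe : P.filter (fun τ => w ∉ τ ∧ insert w τ ∈ Δ) = ∅ := by
        rw [Finset.eq_empty_iff_forall_notMem]
        intro τ hτ
        have hsub := hτD w hwσ τ hτ
        have h1 := Finset.card_le_card hsub
        have h2 := hDlt w hwv hwσ
        have h3 := ((hmemP τ).1 (Finset.mem_filter.1 hτ).1).2
        omega
      simp only [ht]
      rw [hfe, Finset.card_empty]
  set M := verts Δ \ σ with hM
  set E := M.filter (fun w => (D w).card = 2 * m - 1) with hE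
  have hEM : E ⊆ M := Finset.filter_subset _ _
  have hsum_t : ∑ w ∈ M, t w + ∑ w ∈ σ, t w = ∑ w ∈ verts Δ, t w := Finset.sum_sdiff hσv
  have hσt : ∑ w ∈ σ, t w = 2 * m := by
    rw [Finset.sum_congr rfl htσ, Finset.sum_const, hσcard, smul_eq_mul, mul_one]
  have hEcard : E.card = 2 * m := by
    have h1 : ∑ w ∈ M, t w = E.card := by
      rw [hE, Finset.card_filter]
      exact Finset.sum_congr rfl htM
    omega
  have hsum_D : ∑ w ∈ M, (D w).card + 2 * m * (2 * m - 1) = 2 * (m - 1) * n + 4 * m := by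
    have h1 : ∑ w ∈ M, (D w).card + ∑ w ∈ σ, (D w).card = ∑ w ∈ verts Δ, (D w).card :=
      Finset.sum_sdiff hσv
    have h2 : ∑ w ∈ σ, (D w).card = 2 * m * (2 * m - 1) := by
      have h3 : ∀ w ∈ σ, (D w).card = 2 * m - 1 := by
        intro w hw
        rw [hDσ w hw, Finset.card_erase_of_mem hw, hσcard]
      rw [Finset.sum_congr rfl h3, Finset.sum_const, hσcard, smul_eq_mul]
    rw [← h2, h1, ← hswap1, heq]
  have hMn : M.card + 2 * m = n := by
    have h5 : M.card + σ.card = (verts Δ).card := Finset.card_sdiff_add_card_eq_card hσv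
    omega
  -- the key degree bound
  have hstar : ∀ w ∈ verts Δ, w ∉ σ → 2 * m - 2 ≤ (D w).card := by
    by_contra hcon
    push_neg at hcon
    obtain ⟨w₀, hw₀v, hw₀σ, hw₀d⟩ := hcon
    have hw₀M : w₀ ∈ M := Finset.mem_sdiff.2 ⟨hw₀v, hw₀σ⟩
    have hw₀E : w₀ ∉ E := by
      rw [hE, Finset.mem_filter]
      rintro ⟨-, h⟩
      omega
    have hw₀ME : w₀ ∈ M \ E := Finset.mem_sdiff.2 ⟨hw₀M, hw₀E⟩
    have hsplit1 : ∑ w ∈ M \ E, (D w).card + ∑ w ∈ E, (D w).card = ∑ w ∈ M, (D w).card :=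
      Finset.sum_sdiff hEM
    have hsplit2 : ∑ w ∈ (M \ E).erase w₀, (D w).card + (D w₀).card
        = ∑ w ∈ M \ E, (D w).card := Finset.sum_erase_add _ _ hw₀ME
    have hb1 : ∑ w ∈ E, (D w).card ≤ E.card * (2 * m - 1) := by
      rw [← smul_eq_mul]
      apply Finset.sum_le_card_nsmul
      intro x hx
      rw [hE, Finset.mem_filter] at hx
      omega
    have hb3 : ∑ w ∈ (M \ E).erase w₀, (D w).card
        ≤ ((M \ E).erase w₀).card * (2 * m - 2) := by
      rw [← smul_eq_mul]
      apply Finset.sum_le_card_nsmul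
      intro x hx
      have hxME := Finset.mem_of_mem_erase hx
      obtain ⟨hxM, hxE⟩ := Finset.mem_sdiff.1 hxME
      obtain ⟨hxv, hxσ⟩ := Finset.mem_sdiff.1 hxM
      have h1 := hDlt x hxv hxσ
      have h2 : ¬ (D x).card = 2 * m - 1 := by
        intro h
        exact hxE (Finset.mem_filter.2 ⟨hxM, h⟩)
      omega
    have hce : ((M \ E).erase w₀).card + 1 = (M \ E).card := by
      rw [Finset.card_erase_of_mem hw₀ME]
      have := Finset.card_pos.2 ⟨w₀, hw₀ME⟩
      omega
    have hce2 : (M \ E).card + E.card = M.card := Finset.card_sdiff_add_card_eq_card hEM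
    obtain ⟨p, rfl⟩ : ∃ p, m = p + 2 := ⟨m - 2, by omega⟩
    set c := ((M \ E).erase w₀).card with hc
    have hn6 : n = c + 4 * p + 9 := by omega
    have e1 : 2 * (p + 2) - 1 = 2 * p + 3 := by omega
    have e2 : (p + 2) - 1 = p + 1 := by omega
    have e3 : 2 * (p + 2) - 2 = 2 * p + 2 := by omega
    have f1 : ∑ w ∈ (M \ E).erase w₀, (D w).card + (D w₀).card + ∑ w ∈ E, (D w).card
        = ∑ w ∈ M, (D w).card := by omega
    rw [e1, hEcard] at hb1
    rw [e3] at hb3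
    rw [e1, e2, hn6] at hsum_D
    rw [e3] at hw₀d
    zify at hsum_D hb1 hb3 hw₀d f1
    linarith [hsum_D, hb1, hb3, hw₀d, f1]
  -- conclusions
  constructor
  · intro τ hτσ h3
    ext w
    simp only [Finset.mem_biUnion]
    constructor
    · rintro ⟨v, hv, hw⟩
      rw [aux_mem_verts_link_iff hC] at hw ⊢
      obtain ⟨hw1, hw2⟩ := hw
      refine ⟨fun h => hw1 (Finset.mem_insert_of_mem h), ?_⟩
      exact hC.2 _ hw2 _ (Finset.insert_subset_insert w (Finset.subset_insert v τ))
    · intro hw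
      rw [aux_mem_verts_link_iff hC] at hw
      obtain ⟨hwτ, hins⟩ := hw
      have hwv : w ∈ verts Δ := aux_mem_verts.2 ⟨_, hins, Finset.mem_insert_self _ _⟩
      by_cases hwσ : w ∈ σ
      · have hwst : w ∈ σ \ τ := Finset.mem_sdiff.2 ⟨hwσ, hwτ⟩
        have hcc := Finset.card_erase_of_mem hwst
        have hne : ((σ \ τ).erase w).Nonempty := Finset.card_pos.1 (by omega)
        obtain ⟨v, hv⟩ := hne
        have hvst := Finset.mem_of_mem_erase hv
        have hvw : v ≠ w := Finset.ne_of_mem_erase hv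
        refine ⟨v, hvst, ?_⟩
        rw [aux_mem_verts_link_iff hC]
        constructor
        · intro h
          rcases Finset.mem_insert.1 h with h | h
          · exact hvw h.symm
          · exact hwτ h
        · exact hC.2 σ hσΔ _ (Finset.insert_subset hwσ
            (Finset.insert_subset (Finset.mem_sdiff.1 hvst).1 hτσ))
      · have hdeg := hstar w hwv hwσ
        have hnon : ((σ \ τ) ∩ D w).Nonempty := by
          by_contra hemp
          rw [Finset.not_nonempty_iff_eq_empty] at hemp
          have hsub : σ \ τ ⊆ σ \ D w := by
            intro v hv
            obtain ⟨hv1, hv2⟩ := Finset.mem_sdiff.1 hv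
            refine Finset.mem_sdiff.2 ⟨hv1, fun hvD => ?_⟩
            have : v ∈ (σ \ τ) ∩ D w := Finset.mem_inter.2 ⟨Finset.mem_sdiff.2 ⟨hv1, hv2⟩, hvD⟩
            simp [hemp] at this
          have h1 := Finset.card_le_card hsub
          have h2 : (σ \ D w).card = σ.card - (D w).card := Finset.card_sdiff_of_subset (hDsub w)
          have h4 := Finset.card_le_card (hDsub w)
          omega
        obtain ⟨v, hv⟩ := hnon
        obtain ⟨hvst, hvD⟩ := Finset.mem_inter.1 hv
        have hvσ := (Finset.mem_sdiff.1 hvst).1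
        refine ⟨v, hvst, ?_⟩
        rw [aux_mem_verts_link_iff hC]
        constructor
        · intro h
          rcases Finset.mem_insert.1 h with h | h
          · exact hwσ (h ▸ hvσ)
          · exact hwτ h
        · apply hflag2 w hwv _ (Finset.insert_subset hvσ hτσ)
          intro u hu
          rcases Finset.mem_insert.1 hu with rfl | hu
          · exact ((hDmem w u).1 hvD).2.2
          · exact hC.2 _ hins _ (Finset.insert_subset (Finset.mem_insert_self _ _)
              (Finset.singleton_subset_iff.2 (Finset.mem_insert_of_mem hu)))
  · ext w
    simp only [Finset.mem_biUnion]
    constructor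
    · rintro ⟨δ, hδ, hw⟩
      rw [aux_mem_verts_link_iff hC] at hw
      exact aux_mem_verts.2 ⟨_, hw.2, Finset.mem_insert_self _ _⟩
    · intro hwv
      by_cases hwσ : w ∈ σ
      · obtain ⟨δ, hδsub, hδcard⟩ := Finset.exists_subset_card_eq
          (show 2 * m - 2 ≤ (σ.erase w).card by
            rw [Finset.card_erase_of_mem hwσ, hσcard]; omega)
        refine ⟨δ, Finset.mem_powersetCard.2 ⟨hδsub.trans (Finset.erase_subset _ _), hδcard⟩, ?_⟩
        rw [aux_mem_verts_link_iff hC]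
        exact ⟨fun h => Finset.notMem_erase w σ (hδsub h),
          hC.2 σ hσΔ _ (Finset.insert_subset hwσ (hδsub.trans (Finset.erase_subset _ _)))⟩
      · have hdeg := hstar w hwv hwσ
        obtain ⟨δ, hδsub, hδcard⟩ := Finset.exists_subset_card_eq hdeg
        refine ⟨δ, Finset.mem_powersetCard.2 ⟨hδsub.trans (hDsub w), hδcard⟩, ?_⟩
        rw [aux_mem_verts_link_iff hC]
        refine ⟨fun h => hwσ (hDsub w (hδsub h)), ?_⟩
        apply hflag2 w hwv _ (hδsub.trans (hDsub w))
        intro u hu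
        exact ((hDmem w u).1 (hδsub hu)).2.2
end
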